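/- arXiv:2309.04796 — 6 statements merged into one kernel-verified Lean document; each statement's English description precedes it below -/
import Mathlib

section
/- Let w1, w2 be distinct points of the open unit disc D and let t be a complex number with |t·w1| < 1 and |t·w2| < 1. Then the pseudohyperbolic distance satisfies m(w1, w2) ≤ m(t·w1, t·w2) if and only if |t| ≥ 1, where m(a,b) = |(a − b)/(1 − conj(a)·b)|. -/
open Complex Metric Set

/-- Pseudohyperbolic distance on the unit disc. -/
noncomputable def pdist (a b : ℂ) : ℝ := ‖(a - b) / (1 - (starRingEnd ℂ) a * b)‖

set_option maxHeartbeats 1000000 in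
theorem stmt0 (w1 w2 : ℂ) (h1 : w1 ∈ ball (0:ℂ) 1) (h2 : w2 ∈ ball (0:ℂ) 1)
    (hne : w1 ≠ w2) (t : ℂ)
    (ht1 : t * w1 ∈ ball (0:ℂ) 1) (ht2 : t * w2 ∈ ball (0:ℂ) 1) :
    pdist w1 w2 ≤ pdist (t * w1) (t * w2) ↔ 1 ≤ ‖t‖ := by
  have hw1 : ‖w1‖ < 1 := by simpa using mem_ball_zero_iff.mp h1
  have hw2 : ‖w2‖ < 1 := by simpa using mem_ball_zero_iff.mp h2
  have htw1 : ‖t * w1‖ < 1 := by simpa using mem_ball_zero_iff.mp ht1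
  have htw2 : ‖t * w2‖ < 1 := by simpa using mem_ball_zero_iff.mp ht2
  set c : ℂ := (starRingEnd ℂ) w1 * w2 with hc
  have habsc : ‖c‖ = ‖w1‖ * ‖w2‖ := by
    simp [hc]
  have hc0 : 0 ≤ ‖c‖ := norm_nonneg c
  have hc1 : ‖c‖ < 1 := by
    rw [habsc]
    nlinarith [norm_nonneg w1, norm_nonneg w2]
  set s : ℝ := Complex.normSq t with hs
  have hs0 : 0 ≤ s := Complex.normSq_nonneg t
  have hsc : s * ‖c‖ < 1 := by
    have heq : ‖t * w1‖ * ‖t * w2‖ = s * ‖c‖ := by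
      rw [habsc, hs, ← Complex.sq_norm]
      simp [map_mul]; ring
    nlinarith [norm_nonneg (t * w1), norm_nonneg (t * w2)]
  have htt : (starRingEnd ℂ) t * t = (s : ℂ) := by
    rw [hs, mul_comm]; exact Complex.mul_conj t
  have hkey : (starRingEnd ℂ) (t * w1) * (t * w2) = (s : ℂ) * c := by
    calc (starRingEnd ℂ) (t * w1) * (t * w2)
        = ((starRingEnd ℂ) t * t) * ((starRingEnd ℂ) w1 * w2) := by rw [map_mul]; ring
      _ = (s : ℂ) * c := by rw [htt, hc]
  have hD1ne : (1 : ℂ) - c ≠ 0 := by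
    intro h
    have : c = 1 := by linear_combination -h
    rw [this] at hc1; simp at hc1
  have hD2ne : (1 : ℂ) - (s : ℂ) * c ≠ 0 := by
    intro h
    have h' : (s : ℂ) * c = 1 := by linear_combination -h
    have := congrArg (fun z : ℂ => ‖z‖) h'
    simp [map_mul, Complex.norm_real, _root_.abs_of_nonneg hs0] at this
    rw [this] at hsc; simp at hsc
  have hD1 : 0 < ‖1 - c‖ := norm_pos_iff.mpr hD1ne
  have hD2 : 0 < ‖1 - (s : ℂ) * c‖ := norm_pos_iff.mpr hD2ne
  have hd : 0 < ‖w1 - w2‖ := by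
    rw [norm_pos_iff, sub_ne_zero]; exact hne
  have e1 : pdist w1 w2 = ‖w1 - w2‖ / ‖1 - c‖ := by
    rw [pdist, norm_div, hc]
  have e2 : pdist (t * w1) (t * w2)
      = ‖t‖ * ‖w1 - w2‖ / ‖1 - (s : ℂ) * c‖ := by
    rw [pdist, norm_div, hkey, show t * w1 - t * w2 = t * (w1 - w2) by ring, norm_mul]
  set r : ℝ := ‖t‖ with hr
  have hr0 : 0 ≤ r := norm_nonneg t
  have hrs : r ^ 2 = s := Complex.sq_norm t
  set d : ℝ := ‖w1 - w2‖
  set D1 : ℝ := ‖1 - c‖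
  set D2 : ℝ := ‖1 - (s : ℂ) * c‖
  have ha2 : (‖c‖) ^ 2 = c.re ^ 2 + c.im ^ 2 := by
    rw [Complex.sq_norm, Complex.normSq_apply]; ring
  have hD1sq : D1 ^ 2 = 1 - 2 * c.re + (c.re ^ 2 + c.im ^ 2) := by
    rw [Complex.sq_norm, Complex.normSq_apply]
    simp [Complex.sub_re, Complex.sub_im]
    ring
  have hD2sq : D2 ^ 2 = 1 - 2 * s * c.re + s ^ 2 * (c.re ^ 2 + c.im ^ 2) := by
    rw [Complex.sq_norm, Complex.normSq_apply]
    simp [Complex.sub_re, Complex.sub_im, Complex.mul_re, Complex.mul_im]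
    ring
  have hdiff : s * D1 ^ 2 - D2 ^ 2 = (s - 1) * (1 - s * (‖c‖) ^ 2) := by
    rw [hD1sq, hD2sq, ha2]; ring
  have hpos : 0 < 1 - s * (‖c‖) ^ 2 := by nlinarith
  clear_value c s r d D1 D2
  rw [e1, e2, div_le_div_iff₀ hD1 hD2]
  constructor
  · intro h
    have hle : D2 ≤ r * D1 := by
      have h' : d * D2 ≤ d * (r * D1) := by linarith [h, (by ring : r * d * D1 = d * (r * D1))]
      exact le_of_mul_le_mul_left h' hd
    have hsqle : D2 ^ 2 ≤ s * D1 ^ 2 := by nlinarith [hle, hD2.le, hrs]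
    have hprod : 0 ≤ (s - 1) * (1 - s * (‖c‖) ^ 2) := by linarith [hdiff]
    have hs1 : 1 ≤ s := by
      by_contra hlt
      push_neg at hlt
      nlinarith [mul_pos (by linarith : (0:ℝ) < 1 - s) hpos]
    nlinarith [hrs, hr0]
  · intro h
    have hs1 : 1 ≤ s := by nlinarith [hrs]
    have hsq : D2 ^ 2 ≤ (r * D1) ^ 2 := by
      have := mul_nonneg (by linarith : (0:ℝ) ≤ s - 1) hpos.le
      nlinarith [hdiff, hrs]
    have hle : D2 ≤ r * D1 := by
      nlinarith [hsq, mul_nonneg hr0 hD1.le, hD2.le]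
    calc d * D2 ≤ d * (r * D1) := by
          exact mul_le_mul_of_nonneg_left hle hd.le
      _ = r * d * D1 := by ring
end

section
/- The set 𝒟_n = {(f(z1),…,f(zn)) : f holomorphic on Ω with sup|f| < 1} is an open, balanced, convex subset of the unit polydisc D^n. -/
open Complex Metric Set

/-- The (open) Pick body of a domain `Ω ⊆ ℂ^m` at nodes `z 0, …, z (n-1)`:
tuples of values at the nodes of holomorphic functions of sup-norm strictly less than 1. -/
def PickBody (m n : ℕ) (Ω : Set (Fin m → ℂ)) (z : Fin n → (Fin m → ℂ)) :
    Set (Fin n → ℂ) :=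
  {w | ∃ f : (Fin m → ℂ) → ℂ, DifferentiableOn ℂ f Ω ∧
        (∃ c : ℝ, c < 1 ∧ ∀ x ∈ Ω, ‖f x‖ ≤ c) ∧ ∀ j, f (z j) = w j}

/-- Normalized separating function for a pair of distinct points. -/
lemma pick_pair_sep {m : ℕ} (Ω : Set (Fin m → ℂ))
    (hCara : ∀ x ∈ Ω, ∀ y ∈ Ω, x ≠ y → ∃ f : (Fin m → ℂ) → ℂ,
      DifferentiableOn ℂ f Ω ∧ (∃ c : ℝ, ∀ x' ∈ Ω, ‖f x'‖ ≤ c) ∧ f x ≠ f y)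
    {a b : Fin m → ℂ} (ha : a ∈ Ω) (hb : b ∈ Ω) (hab : a ≠ b) :
    ∃ h : (Fin m → ℂ) → ℂ, DifferentiableOn ℂ h Ω ∧
      (∃ M : ℝ, ∀ x ∈ Ω, ‖h x‖ ≤ M) ∧ h a = 1 ∧ h b = 0 := by
  obtain ⟨f, hd, ⟨c, hc⟩, hne⟩ := hCara a ha b hb hab
  set d : ℂ := f a - f b with hdef
  have hd0 : d ≠ 0 := sub_ne_zero.mpr hne
  refine ⟨fun x => (f x - f b) * d⁻¹, (hd.sub_const _).mul_const _,
    ⟨(c + c) * (‖d‖)⁻¹, ?_⟩, ?_, ?_⟩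
  · intro x hx
    have h1 : ‖f x - f b‖ ≤ c + c :=
      (norm_sub_le _ _).trans (add_le_add (hc x hx) (hc b hb))
    calc ‖(f x - f b) * d⁻¹‖
        = ‖f x - f b‖ * (‖d‖)⁻¹ := by rw [norm_mul, norm_inv]
      _ ≤ (c + c) * (‖d‖)⁻¹ :=
          mul_le_mul_of_nonneg_right h1 (inv_nonneg.mpr (norm_nonneg _))
  · show (f a - f b) * d⁻¹ = 1
    rw [← hdef, mul_inv_cancel₀ hd0]
  · simp


/-- Bounded holomorphic "delta" functions at the nodes. -/
lemma pick_delta {m n : ℕ} (Ω : Set (Fin m → ℂ))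
    (hCara : ∀ x ∈ Ω, ∀ y ∈ Ω, x ≠ y → ∃ f : (Fin m → ℂ) → ℂ,
      DifferentiableOn ℂ f Ω ∧ (∃ c : ℝ, ∀ x' ∈ Ω, ‖f x'‖ ≤ c) ∧ f x ≠ f y)
    (z : Fin n → (Fin m → ℂ)) (hz : ∀ j, z j ∈ Ω) (hinj : Function.Injective z) (j : Fin n) :
    ∃ g : (Fin m → ℂ) → ℂ, DifferentiableOn ℂ g Ω ∧
      (∃ M : ℝ, 0 ≤ M ∧ ∀ x ∈ Ω, ‖g x‖ ≤ M) ∧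
      g (z j) = 1 ∧ ∀ k, k ≠ j → g (z k) = 0 := by
  have H : ∀ k : Fin n, ∃ h : (Fin m → ℂ) → ℂ, DifferentiableOn ℂ h Ω ∧
      (∃ M : ℝ, ∀ x ∈ Ω, ‖h x‖ ≤ M) ∧
      (k ≠ j → h (z j) = 1 ∧ h (z k) = 0) := by
    intro k
    by_cases hk : k = j
    · exact ⟨fun _ => 1, differentiableOn_const 1, ⟨1, fun x _ => by simp⟩,
        fun hne => absurd hk hne⟩
    · have hzz : z j ≠ z k := fun h => hk (hinj h).symm
      obtain ⟨h, h1, h2, h3, h4⟩ := pick_pair_sep Ω hCara (hz j) (hz k) hzz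
      exact ⟨h, h1, h2, fun _ => ⟨h3, h4⟩⟩
  choose h hdiff hbd hval using H
  choose M hM using hbd
  have hprod : ∀ u : Finset (Fin n),
      DifferentiableOn ℂ (fun x => ∏ k ∈ u, h k x) Ω := by
    intro u
    induction u using Finset.induction with
    | empty => simpa using differentiableOn_const (1 : ℂ)
    | insert a s hk ih =>
        simp only [Finset.prod_insert hk]
        exact (hdiff _).mul ih
  refine ⟨fun x => ∏ k ∈ Finset.univ.erase j, h k x, hprod _,
    ⟨∏ k ∈ Finset.univ.erase j, max (M k) 0,
      Finset.prod_nonneg fun k _ => le_max_right _ _, fun x hx => ?_⟩, ?_, ?_⟩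
  · calc ‖∏ k ∈ Finset.univ.erase j, h k x‖
        = ∏ k ∈ Finset.univ.erase j, ‖h k x‖ := norm_prod _ _
      _ ≤ ∏ k ∈ Finset.univ.erase j, max (M k) 0 :=
          Finset.prod_le_prod (fun k _ => norm_nonneg _)
            (fun k _ => (hM k x hx).trans (le_max_left _ _))
  · exact Finset.prod_eq_one fun k hk => (hval k (Finset.ne_of_mem_erase hk)).1
  · intro k hk
    exact Finset.prod_eq_zero (Finset.mem_erase.mpr ⟨hk, Finset.mem_univ k⟩)
      (hval k hk).2

theorem stmt1 (m n : ℕ) (Ω : Set (Fin m → ℂ)) (hopen : IsOpen Ω) (hconn : IsConnected Ω)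
    (hCara : ∀ x ∈ Ω, ∀ y ∈ Ω, x ≠ y → ∃ f : (Fin m → ℂ) → ℂ,
      DifferentiableOn ℂ f Ω ∧ (∃ c : ℝ, ∀ x' ∈ Ω, ‖f x'‖ ≤ c) ∧ f x ≠ f y)
    (z : Fin n → (Fin m → ℂ)) (hz : ∀ j, z j ∈ Ω) (hinj : Function.Injective z) :
    IsOpen (PickBody m n Ω z) ∧ Balanced ℂ (PickBody m n Ω z) ∧
      Convex ℝ (PickBody m n Ω z) ∧
      PickBody m n Ω z ⊆ {w : Fin n → ℂ | ∀ j, ‖w j‖ < 1} := by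
  obtain ⟨x0, hx0⟩ := hconn.nonempty
  have hsub : PickBody m n Ω z ⊆ {w : Fin n → ℂ | ∀ j, ‖w j‖ < 1} := by
    rintro w ⟨f, _, ⟨c, hc1, hc⟩, hval⟩ j
    calc ‖w j‖ = ‖f (z j)‖ := by rw [hval j]
      _ ≤ c := hc _ (hz j)
      _ < 1 := hc1
  refine ⟨?_, ?_, ?_, hsub⟩
  · -- openness
    choose g hgdiff hgM hg1 hg0 using fun j =>
      pick_delta Ω hCara z hz hinj j
    choose M hM0 hM using hgM
    set S : ℝ := ∑ j, M j with hS
    have hS0 : 0 ≤ S := Finset.sum_nonneg fun j _ => hM0 j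
    rw [Metric.isOpen_iff]
    rintro w ⟨f, hfd, ⟨c, hc1, hc⟩, hval⟩
    have hc0 : 0 ≤ c := (norm_nonneg _).trans (hc x0 hx0)
    set ε : ℝ := (1 - c) / (2 * (S + 1)) with hε
    have hεpos : 0 < ε := div_pos (by linarith) (by linarith)
    refine ⟨ε, hεpos, fun w' hw' => ?_⟩
    refine ⟨fun x => f x + ∑ j, (w' j - w j) * g j x,
      hfd.add (DifferentiableOn.fun_sum fun j _ => (hgdiff j).const_mul _),
      ⟨c + ε * (S + 1), ?_, fun x hx => ?_⟩, fun k => ?_⟩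
    · have : ε * (S + 1) = (1 - c) / 2 := by
        rw [hε]; field_simp
      rw [this]; linarith
    · have hdist : ∀ j, ‖w' j - w j‖ ≤ ε := by
        intro j
        have := dist_le_pi_dist w' w j
        rw [Metric.mem_ball] at hw'
        rw [Complex.dist_eq] at this
        linarith
      calc ‖f x + ∑ j, (w' j - w j) * g j x‖
          ≤ ‖f x‖ + ‖∑ j, (w' j - w j) * g j x‖ :=
            norm_add_le _ _
        _ ≤ c + ∑ j, ‖(w' j - w j) * g j x‖ :=
            add_le_add (hc x hx) (norm_sum_le _ _)
        _ ≤ c + ∑ j, ε * M j := by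
            refine add_le_add_right (Finset.sum_le_sum fun j _ => ?_) c
            rw [norm_mul]
            exact mul_le_mul (hdist j) (hM j x hx) (norm_nonneg _) hεpos.le
        _ = c + ε * S := by rw [hS, Finset.mul_sum]
        _ ≤ c + ε * (S + 1) := by nlinarith
    · show f (z k) + ∑ j : Fin n, (w' j - w j) * g j (z k) = w' k
      rw [Finset.sum_eq_single_of_mem k (Finset.mem_univ k)
        (fun j _ hj => by rw [hg0 j k hj.symm, mul_zero]), hg1 k, mul_one, hval k]
      ring
  · -- balanced
    rintro a ha w ⟨w', ⟨f, hfd, ⟨c, hc1, hc⟩, hval⟩, rfl⟩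
    refine ⟨fun x => a * f x, hfd.const_mul a, ⟨c, hc1, fun x hx => ?_⟩, fun j => ?_⟩
    · rw [norm_mul]
      calc ‖a‖ * ‖f x‖ ≤ 1 * ‖f x‖ :=
          mul_le_mul_of_nonneg_right (by simpa using ha) (norm_nonneg _)
        _ ≤ c := by rw [one_mul]; exact hc x hx
    · simp [hval j, Pi.smul_apply, smul_eq_mul]
  · -- convex
    rintro w1 ⟨f, hfd, ⟨c1, hc11, hc1⟩, hv1⟩ w2 ⟨g, hgd, ⟨c2, hc21, hc2⟩, hv2⟩ t s ht hs hts
    refine ⟨fun x => (t : ℂ) * f x + (s : ℂ) * g x,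
      (hfd.const_mul _).add (hgd.const_mul _),
      ⟨max c1 c2, max_lt hc11 hc21, fun x hx => ?_⟩, fun j => ?_⟩
    · calc ‖(t : ℂ) * f x + (s : ℂ) * g x‖
          ≤ ‖(t : ℂ) * f x‖ + ‖(s : ℂ) * g x‖ :=
            norm_add_le _ _
        _ = t * ‖f x‖ + s * ‖g x‖ := by
            rw [norm_mul, norm_mul, Complex.norm_real, Complex.norm_real, Real.norm_eq_abs, Real.norm_eq_abs,
              _root_.abs_of_nonneg ht, _root_.abs_of_nonneg hs]
        _ ≤ t * max c1 c2 + s * max c1 c2 :=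
            add_le_add
              (mul_le_mul_of_nonneg_left ((hc1 x hx).trans (le_max_left _ _)) ht)
              (mul_le_mul_of_nonneg_left ((hc2 x hx).trans (le_max_right _ _)) hs)
        _ = max c1 c2 := by rw [← add_mul, hts, one_mul]
    · simp [hv1 j, hv2 j, Pi.add_apply, Pi.smul_apply, Complex.real_smul]
end

section
/- For two distinct points z1, z2 in a Carathéodory hyperbolic domain Ω, the Pick body 𝒟_Ω(z1, z2) equals {(w1, w2) ∈ D × D : m(w1, w2) < c*_Ω(z1, z2)}, where c*_Ω(z1,z2) = sup{ m(g(z1), g(z2)) : g holomorphic Ω → D } is the Möbius Carathéodory pseudodistance. -/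
open Complex Metric Set

/-- Pick body at two points, as a subset of `ℂ × ℂ`. -/
def PickBody2 (m : ℕ) (Ω : Set (Fin m → ℂ)) (z1 z2 : Fin m → ℂ) : Set (ℂ × ℂ) :=
  {p | ∃ f : (Fin m → ℂ) → ℂ, DifferentiableOn ℂ f Ω ∧
        (∃ c : ℝ, c < 1 ∧ ∀ x ∈ Ω, ‖f x‖ ≤ c) ∧ f z1 = p.1 ∧ f z2 = p.2}

/-- The Möbius Carathéodory pseudodistance. -/
noncomputable def cStar (m : ℕ) (Ω : Set (Fin m → ℂ)) (x y : Fin m → ℂ) : ℝ :=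
  sSup {r : ℝ | ∃ g : (Fin m → ℂ) → ℂ, DifferentiableOn ℂ g Ω ∧
    MapsTo g Ω (ball (0:ℂ) 1) ∧ r = pdist (g x) (g y)}

lemma normSq_key (a b : ℂ) :
    Complex.normSq (1 - (starRingEnd ℂ) a * b) - Complex.normSq (a - b)
      = (1 - Complex.normSq a) * (1 - Complex.normSq b) := by
  simp only [Complex.normSq_apply, Complex.sub_re, Complex.sub_im, Complex.mul_re,
    Complex.mul_im, Complex.one_re, Complex.one_im, Complex.conj_re, Complex.conj_im]
  ring

lemma abs_sub_lt_abs_one_sub (a b : ℂ) (ha : ‖a‖ < 1) (hb : ‖b‖ < 1) :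
    ‖a - b‖ < ‖1 - (starRingEnd ℂ) a * b‖ := by
  have h := normSq_key a b
  have hna : Complex.normSq a < 1 := by rw [← Complex.sq_norm]; nlinarith [norm_nonneg a]
  have hnb : Complex.normSq b < 1 := by rw [← Complex.sq_norm]; nlinarith [norm_nonneg b]
  have h2 : (‖a - b‖)^2 < (‖1 - (starRingEnd ℂ) a * b‖)^2 := by
    rw [Complex.sq_norm, Complex.sq_norm]; nlinarith
  exact lt_of_pow_lt_pow_left₀ 2 (norm_nonneg _) h2

lemma pdist_lt_one (a b : ℂ) (ha : ‖a‖ < 1) (hb : ‖b‖ < 1) :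
    pdist a b < 1 := by
  have h := abs_sub_lt_abs_one_sub a b ha hb
  have hpos : 0 < ‖1 - (starRingEnd ℂ) a * b‖ :=
    lt_of_le_of_lt (norm_nonneg _) h
  rw [pdist, norm_div, div_lt_one hpos]; exact h

lemma one_sub_conj_mul_ne (a b : ℂ) (ha : ‖a‖ < 1) (hb : ‖b‖ < 1) :
    1 - (starRingEnd ℂ) a * b ≠ 0 := by
  have h := abs_sub_lt_abs_one_sub a b ha hb
  intro h0
  rw [h0] at h
  simp only [norm_zero] at h
  exact absurd h (norm_nonneg _).not_gt

lemma nu_bound (p ζ : ℂ) (k : ℝ) (hp : ‖p‖ < 1) (hζ : ‖ζ‖ ≤ k) (hk : k < 1) :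
    ‖(ζ + p) / (1 + (starRingEnd ℂ) p * ζ)‖
      ≤ (‖p‖ + k) / (1 + ‖p‖ * k) := by
  set q := ‖p‖ with hq
  have hq0 : 0 ≤ q := norm_nonneg p
  have hk0 : 0 ≤ k := le_trans (norm_nonneg ζ) hζ
  have hDpos : (0:ℝ) < 1 + q * k := by nlinarith
  set c : ℝ := (q + k) / (1 + q * k) with hc
  have hc0 : 0 ≤ c := by positivity
  have hc1 : c ≤ 1 := by rw [hc, div_le_one hDpos]; nlinarith
  have hce : c * (1 + q * k) = q + k := div_mul_cancel₀ _ (ne_of_gt hDpos)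
  -- denominator nonzero
  have habsmul : ‖(starRingEnd ℂ) p * ζ‖ ≤ q * k := by
    rw [norm_mul, Complex.norm_conj]; exact mul_le_mul_of_nonneg_left hζ hq0
  have hqk1 : q * k < 1 := by nlinarith
  have hden : ‖1 + (starRingEnd ℂ) p * ζ‖ > 0 := by
    apply norm_pos_iff.mpr
    intro h0
    have : (starRingEnd ℂ) p * ζ = -1 := by linear_combination h0
    rw [this] at habsmul
    simp at habsmul
    nlinarith
  -- key quadratic estimate
  have hs : ((starRingEnd ℂ) p * ζ).re ≤ q * k := by
    calc ((starRingEnd ℂ) p * ζ).re ≤ ‖(starRingEnd ℂ) p * ζ‖ := Complex.re_le_norm _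
    _ ≤ q * k := habsmul
  have hnζ : Complex.normSq ζ ≤ k ^ 2 := by
    rw [← Complex.sq_norm]; nlinarith [norm_nonneg ζ]
  have hnp : Complex.normSq p = q ^ 2 := by rw [← Complex.sq_norm]
  have hnum : Complex.normSq (ζ + p) =
      Complex.normSq ζ + 2 * ((starRingEnd ℂ) p * ζ).re + Complex.normSq p := by
    simp only [Complex.normSq_apply, Complex.add_re, Complex.add_im, Complex.mul_re,
      Complex.mul_im, Complex.conj_re, Complex.conj_im]
    ring
  have hdenq : Complex.normSq (1 + (starRingEnd ℂ) p * ζ) =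
      1 + 2 * ((starRingEnd ℂ) p * ζ).re + Complex.normSq p * Complex.normSq ζ := by
    simp only [Complex.normSq_apply, Complex.add_re, Complex.add_im, Complex.mul_re,
      Complex.mul_im, Complex.conj_re, Complex.conj_im, Complex.one_re, Complex.one_im]
    ring
  have hsq : (‖ζ + p‖) ^ 2 ≤ (c * ‖1 + (starRingEnd ℂ) p * ζ‖) ^ 2 := by
    rw [mul_pow, Complex.sq_norm, Complex.sq_norm, hnum, hdenq, hnp]
    have e1 : (c * (1 + q * k)) ^ 2 = (q + k) ^ 2 := by rw [hce]
    have hcq : c * q ≤ 1 := mul_le_one₀ hc1 hq0 hp.le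
    have hcq0 : 0 ≤ c * q := mul_nonneg hc0 hq0
    have h1 : 0 ≤ (1 - c^2*q^2) * (k^2 - Complex.normSq ζ) :=
      mul_nonneg (by nlinarith) (by linarith)
    have h2 : 0 ≤ (1 - c^2) * (q*k - ((starRingEnd ℂ) p * ζ).re) :=
      mul_nonneg (by nlinarith) (by linarith)
    nlinarith [h1, h2, e1]
  have habs : ‖ζ + p‖ ≤ c * ‖1 + (starRingEnd ℂ) p * ζ‖ :=
    le_of_pow_le_pow_left₀ two_ne_zero (by positivity) hsq
  rw [norm_div, div_le_iff₀ hden]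
  exact habs

lemma pdist_div_lt (a b : ℂ) (d e : ℝ) (hab : a ≠ b) (ha : ‖a‖ ≤ d)
    (hb : ‖b‖ ≤ d) (hde : d < e) (he1 : e < 1) :
    pdist a b < pdist (a / (e:ℂ)) (b / (e:ℂ)) := by
  have hd0 : 0 ≤ d := le_trans (norm_nonneg a) ha
  have he0 : 0 < e := lt_of_le_of_lt hd0 hde
  have he0' : (e:ℂ) ≠ 0 := by exact_mod_cast ne_of_gt he0
  set t := (starRingEnd ℂ) a * b with ht0
  have habt : ‖t‖ ≤ d ^ 2 := by
    rw [norm_mul, Complex.norm_conj]; nlinarith [norm_nonneg a, norm_nonneg b]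
  have htlt : ‖t‖ < e ^ 2 := by nlinarith
  have hnt : Complex.normSq t < e ^ 4 := by
    rw [← Complex.sq_norm]; nlinarith [norm_nonneg t]
  have he2 : e ^ 2 < 1 := by nlinarith
  have hnte : Complex.normSq t < e ^ 2 := by nlinarith [Complex.normSq_nonneg t]
  have hne2 : ((e:ℂ) ^ 2 - t) ≠ 0 := by
    intro h0
    have : t = (e:ℂ) ^ 2 := by linear_combination -h0
    rw [this] at htlt
    have : ‖(e:ℂ) ^ 2‖ = e ^ 2 := by
      rw [norm_pow, Complex.norm_real, Real.norm_eq_abs, abs_of_pos he0]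
    linarith [htlt, this.ge.trans_lt htlt]
  have h1t : (1 : ℂ) - t ≠ 0 := by
    intro h0
    have : t = 1 := by linear_combination -h0
    rw [this] at htlt
    simp only [norm_one] at htlt
    nlinarith
  have hA : 0 < ‖a - b‖ := norm_pos_iff.mpr (sub_ne_zero.mpr hab)
  have hcd : (starRingEnd ℂ) (a / (e:ℂ)) = (starRingEnd ℂ) a / (e:ℂ) := by
    rw [map_div₀, Complex.conj_ofReal]
  have h3 : 1 - ((starRingEnd ℂ) a / (e:ℂ)) * (b / (e:ℂ)) = ((e:ℂ) ^ 2 - t) / (e:ℂ) ^ 2 := by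
    rw [ht0]; field_simp
  have key : (a / (e:ℂ) - b / (e:ℂ)) / (1 - (starRingEnd ℂ) (a / (e:ℂ)) * (b / (e:ℂ)))
      = ((a - b) * (e:ℂ)) / ((e:ℂ) ^ 2 - t) := by
    rw [hcd, h3]; field_simp
  have hsq : ‖(e:ℂ) ^ 2 - t‖ < e * ‖1 - t‖ := by
    have h2 : (‖(e:ℂ) ^ 2 - t‖) ^ 2 < (e * ‖1 - t‖) ^ 2 := by
      rw [mul_pow, Complex.sq_norm, Complex.sq_norm]
      have ecast : ((e:ℂ) ^ 2) = ((e ^ 2 : ℝ) : ℂ) := by push_cast; ring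
      have e2 : Complex.normSq ((e:ℂ) ^ 2 - t)
          = e ^ 4 - 2 * e ^ 2 * t.re + Complex.normSq t := by
        rw [ecast]
        simp only [Complex.normSq_apply, Complex.sub_re, Complex.sub_im,
          Complex.ofReal_re, Complex.ofReal_im]
        ring
      have e3 : Complex.normSq (1 - t) = 1 - 2 * t.re + Complex.normSq t := by
        simp only [Complex.normSq_apply, Complex.sub_re, Complex.sub_im, Complex.one_re,
          Complex.one_im]
        ring
      rw [e2, e3]
      nlinarith [mul_pos (show (0:ℝ) < 1 - e ^ 2 by nlinarith)
        (show (0:ℝ) < e ^ 2 - Complex.normSq t by linarith)]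
    exact lt_of_pow_lt_pow_left₀ 2 (by positivity) h2
  rw [pdist, pdist, key, norm_div, norm_div, norm_mul, Complex.norm_real, Real.norm_eq_abs,
    abs_of_pos he0]
  rw [div_lt_div_iff₀ (norm_pos_iff.mpr h1t) (norm_pos_iff.mpr hne2)]
  calc ‖a - b‖ * ‖(e:ℂ) ^ 2 - t‖
      < ‖a - b‖ * (e * ‖1 - t‖) := by
        exact mul_lt_mul_of_pos_left hsq hA
    _ = ‖a - b‖ * e * ‖1 - t‖ := by ring

lemma pdist_pos (a b : ℂ) (ha : ‖a‖ < 1) (hb : ‖b‖ < 1) (hab : a ≠ b) :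
    0 < pdist a b :=
  norm_pos_iff.mpr (div_ne_zero (sub_ne_zero.mpr hab) (one_sub_conj_mul_ne a b ha hb))

lemma one_add_ne (X : ℂ) (hX : ‖X‖ < 1) : (1 : ℂ) + X ≠ 0 := by
  intro h0
  have : X = -1 := by linear_combination h0
  rw [this] at hX
  simp at hX

theorem stmt3 (m : ℕ) (Ω : Set (Fin m → ℂ)) (hopen : IsOpen Ω) (hconn : IsConnected Ω)
    (hCara : ∀ x ∈ Ω, ∀ y ∈ Ω, x ≠ y → ∃ f : (Fin m → ℂ) → ℂ,
      DifferentiableOn ℂ f Ω ∧ (∃ c : ℝ, ∀ x' ∈ Ω, ‖f x'‖ ≤ c) ∧ f x ≠ f y)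
    (z1 z2 : Fin m → ℂ) (hz1 : z1 ∈ Ω) (hz2 : z2 ∈ Ω) (hne : z1 ≠ z2) :
    PickBody2 m Ω z1 z2 =
      {p : ℂ × ℂ | p.1 ∈ ball (0:ℂ) 1 ∧ p.2 ∈ ball (0:ℂ) 1 ∧
        pdist p.1 p.2 < cStar m Ω z1 z2} := by
  set S : Set ℝ := {r : ℝ | ∃ g : (Fin m → ℂ) → ℂ, DifferentiableOn ℂ g Ω ∧
    MapsTo g Ω (ball (0:ℂ) 1) ∧ r = pdist (g z1) (g z2)} with hS
  have hcS : cStar m Ω z1 z2 = sSup S := rfl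
  have hSne : S.Nonempty := by
    refine ⟨pdist ((fun _ => (0:ℂ)) z1) ((fun _ => (0:ℂ)) z2), fun _ => 0,
      differentiableOn_const 0, fun x _ => mem_ball_self one_pos, rfl⟩
  have hSbdd : BddAbove S := by
    refine ⟨1, fun r hr => ?_⟩
    obtain ⟨g, hdg, hmg, rfl⟩ := hr
    exact (pdist_lt_one _ _ (by simpa  using mem_ball_zero_iff.mp (hmg hz1))
      (by simpa  using mem_ball_zero_iff.mp (hmg hz2))).le
  apply Set.ext
  rintro ⟨w1, w2⟩
  simp only [PickBody2, mem_setOf_eq]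
  constructor
  · rintro ⟨f, hdf, ⟨c, hc1, hcb⟩, hf1, hf2⟩
    have hw1 : ‖w1‖ < 1 := hf1 ▸ lt_of_le_of_lt (hcb z1 hz1) hc1
    have hw2 : ‖w2‖ < 1 := hf2 ▸ lt_of_le_of_lt (hcb z2 hz2) hc1
    refine ⟨mem_ball_zero_iff.mpr (by simpa  using hw1),
      mem_ball_zero_iff.mpr (by simpa  using hw2), ?_⟩
    rw [hcS]
    by_cases hw : w1 = w2
    · subst hw
      have hpd0 : pdist w1 w1 = 0 := by simp [pdist]
      rw [hpd0]
      obtain ⟨h, hdh, ⟨C, hC⟩, hsep⟩ := hCara z1 hz1 z2 hz2 hne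
      have hC0 : 0 ≤ C := le_trans (norm_nonneg _) (hC z1 hz1)
      set g0 : (Fin m → ℂ) → ℂ := fun x => (h x - h z1) / ((2*C+1 : ℝ) : ℂ) with hg0def
      have hCne : ((2*C+1 : ℝ) : ℂ) ≠ 0 := by
        exact_mod_cast ne_of_gt (by linarith : (0:ℝ) < 2*C+1)
      have hg0lt : ∀ x ∈ Ω, ‖g0 x‖ < 1 := by
        intro x hx
        have htri : ‖h x - h z1‖ ≤ 2*C := by
          calc ‖h x - h z1‖ ≤ ‖h x‖ + ‖h z1‖ := by
                simpa  using norm_sub_le (h x) (h z1)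
          _ ≤ 2*C := by linarith [hC x hx, hC z1 hz1]
        rw [hg0def]
        simp only [norm_div, Complex.norm_real, Real.norm_eq_abs]
        rw [abs_of_pos (by linarith : (0:ℝ) < 2*C+1), div_lt_one (by linarith)]
        linarith
      have hdg0 : DifferentiableOn ℂ g0 Ω := by
        rw [hg0def]
        simp only [div_eq_mul_inv]
        exact (hdh.sub (differentiableOn_const _)).mul (differentiableOn_const _)
      have hmem : pdist (g0 z1) (g0 z2) ∈ S := by
        refine ⟨g0, hdg0, fun x hx =>
          mem_ball_zero_iff.mpr (by simpa  using hg0lt x hx), rfl⟩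
      have hpos : 0 < pdist (g0 z1) (g0 z2) := by
        apply pdist_pos _ _ (hg0lt z1 hz1) (hg0lt z2 hz2)
        have h1 : g0 z1 = 0 := by simp [hg0def]
        have h2 : g0 z2 ≠ 0 := by
          rw [hg0def]
          exact div_ne_zero (sub_ne_zero.mpr (Ne.symm hsep)) hCne
        rw [h1]; exact fun e => h2 e.symm
      exact lt_of_lt_of_le hpos (le_csSup hSbdd hmem)
    · have hd1 : max c 0 < 1 := max_lt hc1 one_pos
      set e : ℝ := (max c 0 + 1)/2 with hedef
      have hde : max c 0 < e := by rw [hedef]; linarith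
      have he1 : e < 1 := by rw [hedef]; linarith
      have he0 : 0 < e := by
        have : (0:ℝ) ≤ max c 0 := le_max_right c 0
        linarith
      have hkey : pdist w1 w2 < pdist (w1 / (e:ℂ)) (w2 / (e:ℂ)) :=
        pdist_div_lt w1 w2 (max c 0) e hw (hf1 ▸ le_max_of_le_left (hcb z1 hz1))
          (hf2 ▸ le_max_of_le_left (hcb z2 hz2)) hde he1
      have hmem : pdist (w1 / (e:ℂ)) (w2 / (e:ℂ)) ∈ S := by
        refine ⟨fun x => f x / (e:ℂ),
          by simp only [div_eq_mul_inv]; exact hdf.mul (differentiableOn_const _),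
          fun x hx => ?_,
          by show pdist (w1 / (e:ℂ)) (w2 / (e:ℂ)) = pdist (f z1 / (e:ℂ)) (f z2 / (e:ℂ));
             rw [hf1, hf2]⟩
        apply mem_ball_zero_iff.mpr
        rw [norm_div, Complex.norm_real, Real.norm_eq_abs, abs_of_pos he0,
          div_lt_one he0]
        exact lt_of_le_of_lt (le_max_of_le_left (hcb x hx)) hde
      exact lt_of_lt_of_le hkey (le_csSup hSbdd hmem)
  · rintro ⟨hb1, hb2, hlt⟩
    have hw1 : ‖w1‖ < 1 := by
      simpa  using mem_ball_zero_iff.mp hb1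
    have hw2 : ‖w2‖ < 1 := by
      simpa  using mem_ball_zero_iff.mp hb2
    rw [hcS] at hlt
    obtain ⟨r', hr'S, hρ⟩ := exists_lt_of_lt_csSup hSne hlt
    obtain ⟨g, hdg, hmg, rfl⟩ := hr'S
    have ha : ‖g z1‖ < 1 := by
      simpa  using mem_ball_zero_iff.mp (hmg hz1)
    have hb : ‖g z2‖ < 1 := by
      simpa  using mem_ball_zero_iff.mp (hmg hz2)
    have hρ0 : 0 ≤ pdist w1 w2 := norm_nonneg _
    have hr0 : 0 < pdist (g z1) (g z2) := lt_of_le_of_lt hρ0 hρ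
    set u : ℂ := (g z2 - g z1) / (1 - (starRingEnd ℂ) (g z1) * g z2) with hudef
    set v : ℂ := (w2 - w1) / (1 - (starRingEnd ℂ) w1 * w2) with hvdef
    have hu : ‖u‖ = pdist (g z1) (g z2) := by
      rw [hudef, pdist, norm_div, norm_div, norm_sub_rev]
    have hv : ‖v‖ = pdist w1 w2 := by
      rw [hvdef, pdist, norm_div, norm_div, norm_sub_rev]
    have hu0 : u ≠ 0 := by
      intro h0; rw [h0, norm_zero] at hu; exact (hu ▸ hr0).false
    set lam : ℂ := v / u with hlamdef
    set k : ℝ := pdist w1 w2 / pdist (g z1) (g z2) with hkdef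
    have hlam : ‖lam‖ = k := by
      rw [hlamdef, norm_div, hu, hv, hkdef]
    have hk0 : 0 ≤ k := by rw [hkdef]; positivity
    have hk1 : k < 1 := by rw [hkdef, div_lt_one hr0]; exact hρ
    set q : ℝ := ‖w1‖ with hqdef
    set c : ℝ := (q + k) / (1 + q * k) with hcdef
    have hq0 : 0 ≤ q := norm_nonneg w1
    have hc1 : c < 1 := by
      rw [hcdef, div_lt_one (by nlinarith)]
      nlinarith
    set μ : ℂ → ℂ := fun z => (z - g z1) / (1 - (starRingEnd ℂ) (g z1) * z) with hμdef
    have hμlt : ∀ x ∈ Ω, ‖μ (g x)‖ < 1 := by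
      intro x hx
      have hzx : ‖g x‖ < 1 := by
        simpa  using mem_ball_zero_iff.mp (hmg hx)
      rw [hμdef]
      simp only [norm_div]
      rw [div_lt_one (norm_pos_iff.mpr (one_sub_conj_mul_ne _ _ ha hzx))]
      rw [norm_sub_rev]
      exact abs_sub_lt_abs_one_sub _ _ ha hzx
    have hζ : ∀ x ∈ Ω, ‖lam * μ (g x)‖ ≤ k := by
      intro x hx
      rw [norm_mul, hlam]
      exact mul_le_of_le_one_right hk0 (hμlt x hx).le
    have hden_ne : ∀ x ∈ Ω, (1 : ℂ) + (starRingEnd ℂ) w1 * (lam * μ (g x)) ≠ 0 := by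
      intro x hx
      apply one_add_ne
      rw [norm_mul, Complex.norm_conj]
      calc ‖w1‖ * ‖lam * μ (g x)‖ ≤ 1 * k :=
            mul_le_mul hw1.le (hζ x hx) (norm_nonneg _) zero_le_one
        _ < 1 := by linarith
    set f : (Fin m → ℂ) → ℂ :=
      fun x => (lam * μ (g x) + w1) / (1 + (starRingEnd ℂ) w1 * (lam * μ (g x))) with hfdef
    have hbound : ∀ x ∈ Ω, ‖f x‖ ≤ c := by
      intro x hx
      rw [hfdef, hcdef, hqdef]
      exact nu_bound w1 (lam * μ (g x)) k hw1 (hζ x hx) hk1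
    have hdμ : DifferentiableOn ℂ (fun x => μ (g x)) Ω := by
      rw [hμdef]
      simp only [div_eq_mul_inv]
      refine (hdg.sub (differentiableOn_const _)).mul (DifferentiableOn.inv
        ((differentiableOn_const _).sub ((differentiableOn_const _).mul hdg)) ?_)
      intro x hx
      have hzx : ‖g x‖ < 1 := by
        simpa  using mem_ball_zero_iff.mp (hmg hx)
      exact one_sub_conj_mul_ne _ _ ha hzx
    have hdf : DifferentiableOn ℂ f Ω := by
      rw [hfdef]
      simp only [div_eq_mul_inv]
      exact (((differentiableOn_const _).mul hdμ).add (differentiableOn_const _)).mul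
        (DifferentiableOn.inv ((differentiableOn_const _).add ((differentiableOn_const _).mul
          ((differentiableOn_const _).mul hdμ))) hden_ne)
    have hμa : μ (g z1) = 0 := by rw [hμdef]; simp
    have hμb : μ (g z2) = u := by rw [hμdef, hudef]
    have hfz1 : f z1 = w1 := by rw [hfdef]; simp [hμa]
    have hfz2 : f z2 = w2 := by
      have hlamu : lam * μ (g z2) = v := by
        rw [hμb, hlamdef, div_mul_cancel₀ _ hu0]
      have hDne : (1 : ℂ) - (starRingEnd ℂ) w1 * w2 ≠ 0 := one_sub_conj_mul_ne _ _ hw1 hw2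
      have hvD : v * (1 - (starRingEnd ℂ) w1 * w2) = w2 - w1 := by
        rw [hvdef]; exact div_mul_cancel₀ _ hDne
      have hden2 : (1 : ℂ) + (starRingEnd ℂ) w1 * v ≠ 0 := by
        have := hden_ne z2 hz2
        rwa [hlamu] at this
      rw [hfdef]
      simp only
      rw [hlamu, div_eq_iff hden2]
      linear_combination hvD
    exact ⟨f, hdf, ⟨c, hc1, hbound⟩, hfz1, hfz2⟩
end

section
/- For any r ∈ (0,1), the domain D²_r = {(w1,w2) ∈ D×D : m(w1,w2) < r} is convex. -/
set_option maxHeartbeats 1000000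


open Complex Metric Set

lemma normSq_one_sub_conj_mul (z w : ℂ) :
    Complex.normSq (1 - (starRingEnd ℂ) z * w)
      = (1 - Complex.normSq z) * (1 - Complex.normSq w) + Complex.normSq (z - w) := by
  simp [Complex.normSq_apply, Complex.mul_re, Complex.mul_im, Complex.sub_re, Complex.sub_im,
    Complex.one_re, Complex.one_im]
  ring

lemma normSq_combo_le (a b : ℝ) (z1 z2 : ℂ) (ha : 0 ≤ a) (hb : 0 ≤ b) (hab : a + b = 1) :
    Complex.normSq (a • z1 + b • z2) ≤ a * Complex.normSq z1 + b * Complex.normSq z2 := by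
  simp [Complex.normSq_apply, Complex.add_re, Complex.add_im, Complex.smul_re, Complex.smul_im]
  nlinarith [sq_nonneg (z1.re - z2.re), sq_nonneg (z1.im - z2.im), mul_nonneg ha hb]

lemma pdist_lt_iff {r : ℝ} (hr0 : 0 < r) {z w : ℂ}
    (hz : ‖z‖ < 1) (hw : ‖w‖ < 1) :
    pdist z w < r ↔
      (1 - r ^ 2) * Complex.normSq (z - w)
        < r ^ 2 * ((1 - Complex.normSq z) * (1 - Complex.normSq w)) := by
  have hprod : ‖(starRingEnd ℂ) z * w‖ < 1 := by
    rw [norm_mul, Complex.norm_conj]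
    exact mul_lt_one_of_nonneg_of_lt_one_left (norm_nonneg z) hz hw.le
  have hden : (1 : ℂ) - (starRingEnd ℂ) z * w ≠ 0 := by
    intro h
    have : (starRingEnd ℂ) z * w = 1 := by linear_combination -h
    rw [this] at hprod
    simp at hprod
  have hdenpos : 0 < ‖1 - (starRingEnd ℂ) z * w‖ :=
    norm_pos_iff.mpr hden
  rw [pdist, norm_div, div_lt_iff₀ hdenpos]
  have e := normSq_one_sub_conj_mul z w
  constructor
  · intro h
    have h2 : ‖z - w‖ ^ 2
        < (r * ‖1 - (starRingEnd ℂ) z * w‖) ^ 2 :=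
      pow_lt_pow_left₀ h (norm_nonneg _) two_ne_zero
    rw [mul_pow, Complex.sq_norm, Complex.sq_norm, e] at h2
    linarith [h2]
  · intro h
    have h2 : ‖z - w‖ ^ 2
        < (r * ‖1 - (starRingEnd ℂ) z * w‖) ^ 2 := by
      rw [mul_pow, Complex.sq_norm, Complex.sq_norm, e]
      linarith [h]
    exact lt_of_pow_lt_pow_left₀ 2 (by positivity) h2

lemma cs_combo (a b u1 v1 u2 v2 : ℝ) (ha : 0 ≤ a) (hb : 0 ≤ b)
    (hu1 : 0 ≤ u1) (hv1 : 0 ≤ v1) (hu2 : 0 ≤ u2) (hv2 : 0 ≤ v2) :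
    (a * Real.sqrt (u1 * v1) + b * Real.sqrt (u2 * v2)) ^ 2
      ≤ (a * u1 + b * u2) * (a * v1 + b * v2) := by
  have hX : Real.sqrt (u1 * v2) ^ 2 = u1 * v2 := Real.sq_sqrt (mul_nonneg hu1 hv2)
  have hY : Real.sqrt (u2 * v1) ^ 2 = u2 * v1 := Real.sq_sqrt (mul_nonneg hu2 hv1)
  have hs1 : Real.sqrt (u1 * v1) ^ 2 = u1 * v1 := Real.sq_sqrt (mul_nonneg hu1 hv1)
  have hs2 : Real.sqrt (u2 * v2) ^ 2 = u2 * v2 := Real.sq_sqrt (mul_nonneg hu2 hv2)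
  have hs12 : Real.sqrt (u1 * v1) * Real.sqrt (u2 * v2)
      = Real.sqrt (u1 * v2) * Real.sqrt (u2 * v1) := by
    rw [← Real.sqrt_mul (mul_nonneg hu1 hv1), ← Real.sqrt_mul (mul_nonneg hu1 hv2)]
    ring_nf
  calc (a * Real.sqrt (u1 * v1) + b * Real.sqrt (u2 * v2)) ^ 2
      = a ^ 2 * Real.sqrt (u1 * v1) ^ 2
        + 2 * (a * b) * (Real.sqrt (u1 * v1) * Real.sqrt (u2 * v2))
        + b ^ 2 * Real.sqrt (u2 * v2) ^ 2 := by ring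
    _ = a ^ 2 * (u1 * v1)
        + 2 * (a * b) * (Real.sqrt (u1 * v2) * Real.sqrt (u2 * v1))
        + b ^ 2 * (u2 * v2) := by rw [hs1, hs2, hs12]
    _ ≤ a ^ 2 * (u1 * v1)
        + (a * b) * (Real.sqrt (u1 * v2) ^ 2 + Real.sqrt (u2 * v1) ^ 2)
        + b ^ 2 * (u2 * v2) := by
          linarith [mul_nonneg (mul_nonneg ha hb)
            (sq_nonneg (Real.sqrt (u1 * v2) - Real.sqrt (u2 * v1)))]
    _ = a ^ 2 * (u1 * v1) + (a * b) * (u1 * v2 + u2 * v1) + b ^ 2 * (u2 * v2) := by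
          rw [hX, hY]
    _ = (a * u1 + b * u2) * (a * v1 + b * v2) := by ring

theorem stmt4 (r : ℝ) (hr : r ∈ Set.Ioo (0:ℝ) 1) :
    Convex ℝ {p : ℂ × ℂ | p.1 ∈ ball (0:ℂ) 1 ∧ p.2 ∈ ball (0:ℂ) 1 ∧ pdist p.1 p.2 < r} := by
  obtain ⟨hr0, hr1⟩ := hr
  have hr2 : (0:ℝ) ≤ 1 - r ^ 2 := sub_nonneg.mpr (pow_le_one₀ hr0.le hr1.le)
  intro p hp q hq a b ha hb hab
  obtain ⟨z1, w1⟩ := p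
  obtain ⟨z2, w2⟩ := q
  obtain ⟨hz1, hw1, hm1⟩ := hp
  obtain ⟨hz2, hw2, hm2⟩ := hq
  simp only [Set.mem_setOf_eq, Prod.smul_mk, Prod.mk_add_mk] at *
  have hz : (a • z1 + b • z2) ∈ ball (0:ℂ) 1 := (convex_ball (0:ℂ) 1) hz1 hz2 ha hb hab
  have hw : (a • w1 + b • w2) ∈ ball (0:ℂ) 1 := (convex_ball (0:ℂ) 1) hw1 hw2 ha hb hab
  refine ⟨hz, hw, ?_⟩
  -- convert ball memberships to abs bounds
  have habs : ∀ x : ℂ, x ∈ ball (0:ℂ) 1 → ‖x‖ < 1 := by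
    intro x hx
    simpa using mem_ball_zero_iff.mp hx
  have hz1' := habs _ hz1
  have hw1' := habs _ hw1
  have hz2' := habs _ hz2
  have hw2' := habs _ hw2
  have hz' := habs _ hz
  have hw' := habs _ hw
  have hnsq : ∀ x : ℂ, ‖x‖ < 1 → Complex.normSq x < 1 := by
    intro x hx
    rw [← Complex.sq_norm]
    exact pow_lt_one₀ (norm_nonneg x) hx two_ne_zero
  set u1 := 1 - Complex.normSq z1 with hu1def
  set v1 := 1 - Complex.normSq w1 with hv1def
  set u2 := 1 - Complex.normSq z2 with hu2def
  set v2 := 1 - Complex.normSq w2 with hv2def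
  have hu1 : 0 < u1 := by have := hnsq _ hz1'; linarith
  have hv1 : 0 < v1 := by have := hnsq _ hw1'; linarith
  have hu2 : 0 < u2 := by have := hnsq _ hz2'; linarith
  have hv2 : 0 < v2 := by have := hnsq _ hw2'; linarith
  rw [pdist_lt_iff hr0 hz' hw']
  have h1 : (1 - r ^ 2) * Complex.normSq (z1 - w1) < r ^ 2 * (u1 * v1) :=
    (pdist_lt_iff hr0 hz1' hw1').mp hm1
  have h2 : (1 - r ^ 2) * Complex.normSq (z2 - w2) < r ^ 2 * (u2 * v2) :=
    (pdist_lt_iff hr0 hz2' hw2').mp hm2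
  set c := Real.sqrt (1 - r ^ 2) with hcdef
  have hc2 : c ^ 2 = 1 - r ^ 2 := Real.sq_sqrt hr2
  set s1 := Real.sqrt (u1 * v1) with hs1def
  set s2 := Real.sqrt (u2 * v2) with hs2def
  have hs1sq : s1 ^ 2 = u1 * v1 := Real.sq_sqrt (by positivity)
  have hs2sq : s2 ^ 2 = u2 * v2 := Real.sq_sqrt (by positivity)
  have hs1nn : 0 ≤ s1 := Real.sqrt_nonneg _
  have hs2nn : 0 ≤ s2 := Real.sqrt_nonneg _
  -- sqrt of hypotheses
  have sqrt1 : c * ‖z1 - w1‖ < r * s1 := by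
    have h := Real.sqrt_lt_sqrt
      (mul_nonneg hr2 (Complex.normSq_nonneg _)) h1
    rwa [Real.sqrt_mul hr2, Real.sqrt_mul (sq_nonneg r),
      Real.sqrt_sq hr0.le, ← Complex.norm_def] at h
  have sqrt2 : c * ‖z2 - w2‖ < r * s2 := by
    have h := Real.sqrt_lt_sqrt
      (mul_nonneg hr2 (Complex.normSq_nonneg _)) h2
    rwa [Real.sqrt_mul hr2, Real.sqrt_mul (sq_nonneg r),
      Real.sqrt_sq hr0.le, ← Complex.norm_def] at h
  -- triangle inequality
  have htri : ‖(a • z1 + b • z2) - (a • w1 + b • w2)‖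
      ≤ a * ‖z1 - w1‖ + b * ‖z2 - w2‖ := by
    have hrw : (a • z1 + b • z2) - (a • w1 + b • w2) = a • (z1 - w1) + b • (z2 - w2) := by
      simp only [smul_sub]; abel
    rw [hrw]
    calc ‖a • (z1 - w1) + b • (z2 - w2)‖
        ≤ ‖a • (z1 - w1)‖ + ‖b • (z2 - w2)‖ := norm_add_le _ _
      _ = a * ‖z1 - w1‖ + b * ‖z2 - w2‖ := by
          rw [norm_smul, norm_smul, Real.norm_of_nonneg ha,
            Real.norm_of_nonneg hb]
  -- concavity of 1 - normSq
  have hU : a * u1 + b * u2 ≤ 1 - Complex.normSq (a • z1 + b • z2) := by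
    have := normSq_combo_le a b z1 z2 ha hb hab
    simp only [hu1def, hu2def]
    linarith [this]
  have hV : a * v1 + b * v2 ≤ 1 - Complex.normSq (a • w1 + b • w2) := by
    have := normSq_combo_le a b w1 w2 ha hb hab
    simp only [hv1def, hv2def]
    linarith [this]
  set U := 1 - Complex.normSq (a • z1 + b • z2) with hUdef
  set V := 1 - Complex.normSq (a • w1 + b • w2) with hVdef
  have hUpos : 0 < U := by have := hnsq _ hz'; simp only [hUdef]; linarith
  have hVpos : 0 < V := by have := hnsq _ hw'; simp only [hVdef]; linarith
  -- Cauchy-Schwarz step: (a s1 + b s2)^2 ≤ (a u1 + b u2)(a v1 + b v2) ≤ U V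
  have hCS : (a * s1 + b * s2) ^ 2 ≤ U * V := by
    have key := cs_combo a b u1 v1 u2 v2 ha hb hu1.le hv1.le hu2.le hv2.le
    rw [← hs1def, ← hs2def] at key
    have h2 : (a * u1 + b * u2) * (a * v1 + b * v2) ≤ U * V := by
      have hau : 0 ≤ a * u1 + b * u2 := by positivity
      have hav : 0 ≤ a * v1 + b * v2 := by positivity
      exact mul_le_mul hU hV hav (le_of_lt hUpos)
    linarith
  have hsum : a * s1 + b * s2 ≤ Real.sqrt (U * V) :=
    (Real.le_sqrt (by positivity) (by positivity)).mpr hCS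
  -- final chain
  have hmid : a * (c * ‖z1 - w1‖) + b * (c * ‖z2 - w2‖)
      < a * (r * s1) + b * (r * s2) := by
    rcases eq_or_lt_of_le ha with h0 | hapos
    · have hb1 : b = 1 := by linarith
      rw [← h0, hb1]
      simpa using sqrt2
    · have t1 : a * (c * ‖z1 - w1‖) < a * (r * s1) :=
        mul_lt_mul_of_pos_left sqrt1 hapos
      have t2 : b * (c * ‖z2 - w2‖) ≤ b * (r * s2) :=
        mul_le_mul_of_nonneg_left sqrt2.le hb
      linarith
  have hcnn : 0 ≤ c := Real.sqrt_nonneg _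
  have hchain : c * ‖(a • z1 + b • z2) - (a • w1 + b • w2)‖
      < r * Real.sqrt (U * V) := by
    calc c * ‖(a • z1 + b • z2) - (a • w1 + b • w2)‖
        ≤ c * (a * ‖z1 - w1‖ + b * ‖z2 - w2‖) :=
          mul_le_mul_of_nonneg_left htri hcnn
      _ = a * (c * ‖z1 - w1‖) + b * (c * ‖z2 - w2‖) := by ring
      _ < a * (r * s1) + b * (r * s2) := hmid
      _ = r * (a * s1 + b * s2) := by ring
      _ ≤ r * Real.sqrt (U * V) := mul_le_mul_of_nonneg_left hsum hr0.le
  have hsq := mul_self_lt_mul_self (by positivity) hchain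
  have hUV : Real.sqrt (U * V) ^ 2 = U * V := Real.sq_sqrt (by positivity)
  have e1 : (1 - r ^ 2) * Complex.normSq ((a • z1 + b • z2) - (a • w1 + b • w2))
      = (c * ‖(a • z1 + b • z2) - (a • w1 + b • w2)‖)
        * (c * ‖(a • z1 + b • z2) - (a • w1 + b • w2)‖) := by
    rw [← hc2, ← Complex.sq_norm]
    ring
  have e2 : r ^ 2 * (U * V) = (r * Real.sqrt (U * V)) * (r * Real.sqrt (U * V)) := by
    have h := Real.mul_self_sqrt (le_of_lt (mul_pos hUpos hVpos))
    linear_combination (-(r ^ 2)) * h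
  rw [e1, e2]
  exact hsq
end

section
/- For nonzero α ∈ ℂ^n with α_i ≠ α_j for some pair, and t = 1/μ_{𝒟_n}(α), one has d_α(z_i, z_j) = m(t·α_i, t·α_j) for all i, j; in particular the supremum defining d_α is attained by a holomorphic function f: Ω → closure(D) with (f(z1),…,f(zn)) ∈ ℂ·α. -/
open Complex Metric Set
open scoped Pointwise

lemma pdist_self (a : ℂ) : pdist a a = 0 := by simp [pdist]

lemma conj_mul_self_eq (c : ℂ) : (starRingEnd ℂ) c * c = ((‖c‖ ^ 2 : ℝ) : ℂ) := by
  rw [mul_comm, Complex.mul_conj, Complex.normSq_eq_norm_sq]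

lemma den_ne {a b : ℂ} {s : ℝ} (hs : 0 ≤ s) (ha : s * ‖a‖ ≤ 1)
    (hb : s * ‖b‖ ≤ 1) (hab : a ≠ b) :
    (1 : ℂ) - (s : ℂ) ^ 2 * ((starRingEnd ℂ) a * b) ≠ 0 := by
  intro h
  have h1 : (s : ℂ) ^ 2 * ((starRingEnd ℂ) a * b) = 1 := by
    have := sub_eq_zero.mp h; linear_combination -this
  have habs : (s * ‖a‖) * (s * ‖b‖) = 1 := by
    have := congrArg (fun x : ℂ => ‖x‖) h1
    simpa [norm_mul, Complex.norm_of_nonneg hs, _root_.abs_of_nonneg hs, pow_two, mul_assoc,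
      mul_comm, mul_left_comm] using this
  have hxa : s * ‖a‖ = 1 :=
    le_antisymm ha (by nlinarith [mul_le_of_le_one_right (mul_nonneg hs (norm_nonneg a)) hb])
  have hCc : (s : ℂ) ^ 2 * ((‖a‖ ^ 2 : ℝ) : ℂ) = 1 := by
    have : (s * ‖a‖) ^ 2 = 1 := by rw [hxa]; norm_num
    have h' : s ^ 2 * ‖a‖ ^ 2 = 1 := by nlinarith
    push_cast
    exact_mod_cast congrArg (fun r : ℝ => (r : ℂ)) h'
  have key : a = b := by
    linear_combination (-a) * h1 + ((s:ℂ)^2 * b) * conj_mul_self_eq a + b * hCc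
  exact hab key

lemma pdist_form (s : ℝ) (a b : ℂ) :
    pdist ((s : ℂ) * a) ((s : ℂ) * b) =
      ‖(s : ℂ) * (a - b)‖ /
        ‖1 - (s : ℂ) ^ 2 * ((starRingEnd ℂ) a * b)‖ := by
  rw [pdist, norm_div]
  congr 2
  · ring
  · simp [map_mul, Complex.conj_ofReal]; ring

lemma pdist_mul_abs (c a b : ℂ) :
    pdist (c * a) (c * b) = pdist (((‖c‖ : ℝ) : ℂ) * a) (((‖c‖ : ℝ) : ℂ) * b) := by
  rw [pdist_form, pdist, norm_div]
  congr 1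
  · rw [show c * a - c * b = c * (a - b) by ring, norm_mul, norm_mul]
    simp [Complex.norm_real, norm_norm]
  · congr 1
    rw [show ((‖c‖ : ℝ) : ℂ) ^ 2 = ((‖c‖ ^ 2 : ℝ) : ℂ) by push_cast; ring]
    simp only [map_mul]
    linear_combination (-((starRingEnd ℂ) a * b)) * conj_mul_self_eq c

lemma pdist_mono {a b : ℂ} {s t : ℝ} (hs : 0 ≤ s) (hst : s ≤ t)
    (ha : t * ‖a‖ ≤ 1) (hb : t * ‖b‖ ≤ 1) (hab : a ≠ b) :
    pdist ((s : ℂ) * a) ((s : ℂ) * b) ≤ pdist ((t : ℂ) * a) ((t : ℂ) * b) := by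
  have ht0 : 0 ≤ t := hs.trans hst
  have hsa : s * ‖a‖ ≤ 1 :=
    le_trans (mul_le_mul_of_nonneg_right hst (norm_nonneg a)) ha
  have hsb : s * ‖b‖ ≤ 1 :=
    le_trans (mul_le_mul_of_nonneg_right hst (norm_nonneg b)) hb
  rw [pdist_form, pdist_form]
  set w : ℂ := (starRingEnd ℂ) a * b with hw
  set A : ℝ := ‖a - b‖ with hA
  have hA0 : 0 ≤ A := norm_nonneg _
  set ds : ℝ := ‖1 - (s : ℂ) ^ 2 * w‖ with hds
  set dt : ℝ := ‖1 - (t : ℂ) ^ 2 * w‖ with hdt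
  have hdspos : 0 < ds := norm_pos_iff.mpr (den_ne hs hsa hsb hab)
  have hdtpos : 0 < dt := norm_pos_iff.mpr (den_ne ht0 ha hb hab)
  have hnum_s : ‖(s : ℂ) * (a - b)‖ = s * A := by
    rw [norm_mul, Complex.norm_of_nonneg hs]
  have hnum_t : ‖(t : ℂ) * (a - b)‖ = t * A := by
    rw [norm_mul, Complex.norm_of_nonneg ht0]
  rw [hnum_s, hnum_t, div_le_div_iff₀ hdspos hdtpos]
  have hds2 : ds ^ 2 = (1 - s ^ 2 * w.re) ^ 2 + (s ^ 2 * w.im) ^ 2 := by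
    rw [hds, Complex.sq_norm, Complex.normSq_apply]
    simp [pow_two, Complex.mul_re, Complex.mul_im]
  have hdt2 : dt ^ 2 = (1 - t ^ 2 * w.re) ^ 2 + (t ^ 2 * w.im) ^ 2 := by
    rw [hdt, Complex.sq_norm, Complex.normSq_apply]
    simp [pow_two, Complex.mul_re, Complex.mul_im]
  have hxy : w.re ^ 2 + w.im ^ 2 = (‖a‖ * ‖b‖) ^ 2 := by
    have h1 : w.re ^ 2 + w.im ^ 2 = Complex.normSq w := by
      rw [Complex.normSq_apply]; ring
    rw [h1, hw, map_mul, Complex.normSq_conj, Complex.normSq_eq_norm_sq, Complex.normSq_eq_norm_sq]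
    ring
  have key : 0 ≤ (t ^ 2 - s ^ 2) * (1 - s ^ 2 * t ^ 2 * (w.re ^ 2 + w.im ^ 2)) := by
    apply mul_nonneg (by nlinarith)
    rw [hxy]
    have huv0 : 0 ≤ (s * ‖a‖) * (t * ‖b‖) :=
      mul_nonneg (mul_nonneg hs (norm_nonneg a)) (mul_nonneg ht0 (norm_nonneg b))
    have huv : (s * ‖a‖) * (t * ‖b‖) ≤ 1 := by
      nlinarith [mul_nonneg hs (norm_nonneg a), mul_nonneg ht0 (norm_nonneg b)]
    have h1 : 0 ≤ 1 - (s * ‖a‖) * (t * ‖b‖) := by linarith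
    have h2 : 0 ≤ 1 + (s * ‖a‖) * (t * ‖b‖) := by linarith
    nlinarith [mul_nonneg h1 h2]
  have hsq : (s * A * dt) ^ 2 ≤ (t * A * ds) ^ 2 := by
    have e1 : (s * A * dt) ^ 2 = s ^ 2 * A ^ 2 * dt ^ 2 := by ring
    have e2 : (t * A * ds) ^ 2 = t ^ 2 * A ^ 2 * ds ^ 2 := by ring
    rw [e1, e2, hds2, hdt2]
    have iden : t ^ 2 * A ^ 2 * ((1 - s ^ 2 * w.re) ^ 2 + (s ^ 2 * w.im) ^ 2)
        - s ^ 2 * A ^ 2 * ((1 - t ^ 2 * w.re) ^ 2 + (t ^ 2 * w.im) ^ 2)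
        = A ^ 2 * ((t ^ 2 - s ^ 2) * (1 - s ^ 2 * t ^ 2 * (w.re ^ 2 + w.im ^ 2))) := by ring
    linarith [mul_nonneg (sq_nonneg A) key, iden]
  have h2 : (0:ℝ) ≤ t * A * ds := by positivity
  exact le_of_pow_le_pow_left₀ (by norm_num) h2 hsq

lemma oneD {φ : ℂ → ℂ} {ρ : ℝ} (hρ : 1 < ρ) (hd : DifferentiableOn ℂ φ (ball 0 ρ))
    (hb : ∀ z ∈ ball (0 : ℂ) ρ, ‖φ z‖ ≤ 1) :
    ‖deriv φ 0‖ ≤ 3 / ρ ∧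
      ‖φ 1 - φ 0 - deriv φ 0‖ ≤ 5 / ρ ^ 2 := by
  have hρ0 : (0 : ℝ) < ρ := lt_trans one_pos hρ
  have h0mem : (0 : ℂ) ∈ ball (0 : ℂ) ρ := mem_ball_self hρ0
  have h1mem : (1 : ℂ) ∈ ball (0 : ℂ) ρ := by
    simp only [mem_ball, dist_zero_right, norm_one]; exact hρ
  -- first Schwarz application to φ
  have maps1 : MapsTo φ (ball (0:ℂ) ρ) (ball (φ 0) 3) := by
    intro z hz
    rw [mem_ball, dist_eq_norm]
    calc ‖φ z - φ 0‖ ≤ ‖φ z‖ + ‖φ 0‖ := norm_sub_le _ _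
      _ ≤ 1 + 1 := add_le_add (hb z hz) (hb 0 h0mem)
      _ < 3 := by norm_num
  have hφds : ∀ z ∈ ball (0:ℂ) ρ, ‖dslope φ 0 z‖ ≤ 3 / ρ := fun z hz =>
    Complex.norm_dslope_le_div_of_mapsTo_ball hd (maps1.mono_right ball_subset_closedBall) hz
  have hderiv : ‖deriv φ 0‖ ≤ 3 / ρ := by
    have := hφds 0 h0mem
    rwa [dslope_same] at this
  refine ⟨hderiv, ?_⟩
  -- ψ : subtract linearization
  set ψ : ℂ → ℂ := fun z => φ z - φ 0 - deriv φ 0 * z with hψ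
  have hψd : DifferentiableOn ℂ ψ (ball 0 ρ) := by
    apply DifferentiableOn.sub
    · exact hd.sub_const _
    · exact (differentiable_id.const_mul _).differentiableOn
  have hψ0 : ψ 0 = 0 := by simp [hψ]
  have hφat : DifferentiableAt ℂ φ 0 := hd.differentiableAt (isOpen_ball.mem_nhds h0mem)
  have hψderiv : deriv ψ 0 = 0 := by
    have h1 : HasDerivAt ψ (deriv φ 0 - deriv φ 0) 0 := by
      exact ((hφat.hasDerivAt.sub_const (φ 0)).sub
        ((hasDerivAt_id (0:ℂ)).const_mul (deriv φ 0))).congr_deriv (by simp)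
    simpa using h1.deriv
  have hψb : ∀ z ∈ ball (0:ℂ) ρ, ‖ψ z‖ ≤ 2 + 3 / ρ * ‖z‖ := by
    intro z hz
    have h1 : ‖deriv φ 0 * z‖ ≤ 3 / ρ * ‖z‖ := by
      rw [norm_mul]
      exact mul_le_mul_of_nonneg_right hderiv (norm_nonneg z)
    have t1 : ‖ψ z‖ ≤ ‖φ z - φ 0‖ + ‖deriv φ 0 * z‖ := by
      simpa [hψ, sub_sub] using norm_sub_le (φ z - φ 0) (deriv φ 0 * z)
    have t2 : ‖φ z - φ 0‖ ≤ ‖φ z‖ + ‖φ 0‖ := by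
      simpa using norm_sub_le (φ z) (φ 0)
    have := hb z hz; have := hb 0 h0mem
    linarith
  have mapsψ : MapsTo ψ (ball (0:ℂ) ρ) (ball (ψ 0) 5) := by
    intro z hz
    rw [hψ0, mem_ball, dist_zero_right]
    have hb1 := hψb z hz
    have hz' : ‖z‖ < ρ := by
      simpa [mem_ball, dist_zero_right] using hz
    have h2 : 3 / ρ * ‖z‖ < 3 / ρ * ρ :=
      mul_lt_mul_of_pos_left hz' (by positivity)
    have h3 : 3 / ρ * ρ = 3 := by field_simp
    linarith
  have hψ1ds : ∀ z ∈ ball (0:ℂ) ρ, ‖dslope ψ 0 z‖ ≤ 5 / ρ := fun z hz =>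
    Complex.norm_dslope_le_div_of_mapsTo_ball hψd (mapsψ.mono_right ball_subset_closedBall) hz
  set ψ₁ : ℂ → ℂ := dslope ψ 0 with hψ₁
  have hψ₁0 : ψ₁ 0 = 0 := by rw [hψ₁, dslope_same]; exact hψderiv
  have hψ₁d : DifferentiableOn ℂ ψ₁ (ball 0 ρ) :=
    (Complex.differentiableOn_dslope (ball_mem_nhds 0 hρ0)).mpr hψd
  have hfinal : ∀ ε : ℝ, 0 < ε → ‖ψ₁ 1‖ ≤ (5 / ρ + ε) / ρ := by
    intro ε hε
    have mapsψ₁ : MapsTo ψ₁ (ball (0:ℂ) ρ) (ball (ψ₁ 0) (5 / ρ + ε)) := by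
      intro z hz
      rw [hψ₁0, mem_ball, dist_zero_right]
      exact lt_of_le_of_lt (hψ1ds z hz) (by linarith)
    have := Complex.norm_dslope_le_div_of_mapsTo_ball hψ₁d (mapsψ₁.mono_right ball_subset_closedBall) h1mem
    rw [dslope_of_ne _ (one_ne_zero)] at this
    rw [slope_def_field] at this
    rw [hψ₁0, sub_zero, sub_zero, div_one] at this
    exact this
  have hψ₁1 : ‖ψ₁ 1‖ ≤ 5 / ρ ^ 2 := by
    have h5 : 5 / ρ ^ 2 = (5 / ρ) / ρ := by ring
    rw [h5]
    refine le_of_forall_pos_le_add fun ε hε => ?_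
    have := hfinal (ε * ρ) (by positivity)
    calc ‖ψ₁ 1‖ ≤ (5 / ρ + ε * ρ) / ρ := this
      _ = 5 / ρ / ρ + ε := by field_simp
  have hψval : ψ₁ 1 = φ 1 - φ 0 - deriv φ 0 := by
    rw [hψ₁, dslope_of_ne _ (one_ne_zero), slope_def_field, hψ0, sub_zero, sub_zero, div_one, hψ]
    ring
  rwa [hψval] at hψ₁1

lemma keyEst {m : ℕ} {Ω : Set (Fin m → ℂ)} (hopen : IsOpen Ω)
    {g : (Fin m → ℂ) → ℂ} (hd : DifferentiableOn ℂ g Ω)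
    (hb : ∀ x ∈ Ω, ‖g x‖ ≤ 1)
    {x₀ : Fin m → ℂ} {R : ℝ} (hR : 0 < R) (hsub : closedBall x₀ R ⊆ Ω)
    {h : Fin m → ℂ} (hh : ‖h‖ < R) :
    ‖(fderiv ℂ g x₀) h‖ ≤ 3 * ‖h‖ / R ∧
      ‖g (x₀ + h) - g x₀ - (fderiv ℂ g x₀) h‖ ≤ 5 * ‖h‖ ^ 2 / R ^ 2 := by
  have hx₀ : x₀ ∈ Ω := hsub (mem_closedBall_self hR.le)
  rcases eq_or_ne h 0 with rfl | hh0
  · simp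
  have hhn : 0 < ‖h‖ := norm_pos_iff.mpr hh0
  set ρ : ℝ := R / ‖h‖ with hρdef
  have hρ : 1 < ρ := (one_lt_div hhn).mpr hh
  set φ : ℂ → ℂ := fun l => g (x₀ + l • h) with hφ
  have hmem : ∀ l : ℂ, l ∈ ball (0 : ℂ) ρ → x₀ + l • h ∈ Ω := by
    intro l hl
    apply hsub
    rw [mem_closedBall, dist_eq_norm, add_sub_cancel_left, norm_smul]
    have hl' : ‖l‖ < ρ := by simpa [mem_ball, dist_zero_right] using hl
    calc ‖l‖ * ‖h‖ ≤ ρ * ‖h‖ := mul_le_mul_of_nonneg_right hl'.le (norm_nonneg h)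
      _ = R := by rw [hρdef]; field_simp
  have hinner : ∀ l : ℂ, HasDerivAt (fun l : ℂ => x₀ + l • h) h l := by
    intro l
    simpa using ((hasDerivAt_id l).smul_const h).const_add x₀
  have hφd : DifferentiableOn ℂ φ (ball 0 ρ) := by
    intro l hl
    have : DifferentiableAt ℂ φ l := by
      have hg : DifferentiableAt ℂ g (x₀ + l • h) :=
        hd.differentiableAt (hopen.mem_nhds (hmem l hl))
      exact hg.comp l (hinner l).differentiableAt
    exact this.differentiableWithinAt
  have hφb : ∀ z ∈ ball (0 : ℂ) ρ, ‖φ z‖ ≤ 1 := fun z hz => hb _ (hmem z hz)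
  have hφ0 : φ 0 = g x₀ := by simp [hφ]
  have hφ1 : φ 1 = g (x₀ + h) := by simp [hφ]
  have hφderiv : HasDerivAt φ ((fderiv ℂ g x₀) h) 0 := by
    have hg : HasFDerivAt g (fderiv ℂ g x₀) x₀ :=
      (hd.differentiableAt (hopen.mem_nhds hx₀)).hasFDerivAt
    have hg' : HasFDerivAt g (fderiv ℂ g x₀) (x₀ + (0:ℂ) • h) := by simpa using hg
    exact hg'.comp_hasDerivAt 0 (hinner 0)
  obtain ⟨hd1, hd2⟩ := oneD hρ hφd hφb
  rw [hφderiv.deriv] at hd1 hd2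
  constructor
  · have heq : (3 : ℝ) / ρ = 3 * ‖h‖ / R := by rw [hρdef]; field_simp
    rw [← heq]
    exact hd1
  · have heq : (5 : ℝ) / ρ ^ 2 = 5 * ‖h‖ ^ 2 / R ^ 2 := by rw [hρdef]; field_simp
    rw [← heq]
    rw [hφ0, hφ1] at hd2
    exact hd2

lemma limitExists {m : ℕ} {Ω : Set (Fin m → ℂ)} (hopen : IsOpen Ω)
    (F : ℕ → (Fin m → ℂ) → ℂ) (hd : ∀ k, DifferentiableOn ℂ (F k) Ω)
    (hb : ∀ k, ∀ x ∈ Ω, ‖F k x‖ ≤ 1) :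
    ∃ f : (Fin m → ℂ) → ℂ, DifferentiableOn ℂ f Ω ∧ (∀ x ∈ Ω, ‖f x‖ ≤ 1) ∧
      ∃ U : Ultrafilter ℕ, (U : Filter ℕ) ≤ Filter.atTop ∧
        ∀ x ∈ Ω, Filter.Tendsto (fun k => F k x) (U : Filter ℕ) (nhds (f x)) := by
  haveI : FiniteDimensional ℂ ((Fin m → ℂ) →L[ℂ] ℂ) := inferInstance
  haveI : ProperSpace ((Fin m → ℂ) →L[ℂ] ℂ) := FiniteDimensional.proper ℂ _
  set U : Ultrafilter ℕ := Ultrafilter.of Filter.atTop with hU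
  have hUle : (U : Filter ℕ) ≤ Filter.atTop := Ultrafilter.of_le _
  have hlim : ∀ x : Fin m → ℂ, ∃ a : ℂ, x ∈ Ω →
      (‖a‖ ≤ 1 ∧ Filter.Tendsto (fun k => F k x) (U : Filter ℕ) (nhds a)) := by
    intro x
    by_cases hx : x ∈ Ω
    · have hc : IsCompact (closedBall (0 : ℂ) 1) := isCompact_closedBall _ _
      have hle : (U.map fun k => F k x : Filter ℂ) ≤ Filter.principal (closedBall 0 1) := by
        rw [Filter.le_principal_iff, Ultrafilter.coe_map, Filter.mem_map]
        apply Filter.univ_mem'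
        intro k
        simpa [mem_closedBall, Complex.dist_eq] using hb k x hx
      obtain ⟨a, ha, hta⟩ := hc.ultrafilter_le_nhds (U.map fun k => F k x) (by exact_mod_cast hle)
      refine ⟨a, fun _ => ⟨?_, ?_⟩⟩
      · simpa [mem_closedBall, Complex.dist_eq] using ha
      · have := hta; rw [Ultrafilter.coe_map] at this; exact this
    · exact ⟨0, fun h => absurd h hx⟩
  choose f hf using hlim
  refine ⟨f, ?_, fun x hx => (hf x hx).1, U, hUle, fun x hx => (hf x hx).2⟩
  intro x₀ hx₀
  obtain ⟨ε, hε, hball⟩ := Metric.isOpen_iff.mp hopen x₀ hx₀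
  set R : ℝ := ε / 2 with hR
  have hRpos : 0 < R := by positivity
  have hsub : closedBall x₀ R ⊆ Ω := by
    intro y hy
    apply hball
    rw [mem_ball]
    calc dist y x₀ ≤ R := mem_closedBall.mp hy
      _ < ε := by rw [hR]; linarith
  set D : ℕ → (Fin m → ℂ) →L[ℂ] ℂ := fun k => fderiv ℂ (F k) x₀ with hD
  have hDb : ∀ k, ‖D k‖ ≤ 3 / R := by
    intro k
    apply ContinuousLinearMap.opNorm_le_of_ball hRpos (by positivity)
    intro h hh
    have hh' : ‖h‖ < R := by simpa [mem_ball, dist_zero_right] using hh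
    have h1 := (keyEst hopen (hd k) (hb k) hRpos hsub hh').1
    calc ‖D k h‖ ≤ 3 * ‖h‖ / R := h1
      _ = 3 / R * ‖h‖ := by ring
  -- limit of derivatives along the ultrafilter
  have hcD : IsCompact (closedBall (0 : (Fin m → ℂ) →L[ℂ] ℂ) (3 / R)) := isCompact_closedBall _ _
  have hleD : (U.map D : Filter ((Fin m → ℂ) →L[ℂ] ℂ)) ≤
      Filter.principal (closedBall 0 (3 / R)) := by
    rw [Filter.le_principal_iff, Ultrafilter.coe_map, Filter.mem_map]
    apply Filter.univ_mem'
    intro k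
    simpa [mem_closedBall, dist_zero_right] using hDb k
  obtain ⟨L, _, htL⟩ := hcD.ultrafilter_le_nhds (U.map D) (by exact_mod_cast hleD)
  have hDL : Filter.Tendsto D (U : Filter ℕ) (nhds L) := by
    have := htL; rw [Ultrafilter.coe_map] at this; exact this
  have happ : ∀ h : Fin m → ℂ, Filter.Tendsto (fun k => D k h) (U : Filter ℕ) (nhds (L h)) := by
    intro h
    have hcont : Continuous fun Φ : (Fin m → ℂ) →L[ℂ] ℂ => Φ h :=
      (ContinuousLinearMap.apply ℂ ℂ h).continuous
    exact (hcont.tendsto L).comp hDL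
  -- the quadratic estimate for the limit
  have hquad : ∀ h : Fin m → ℂ, ‖h‖ < R →
      ‖f (x₀ + h) - f x₀ - L h‖ ≤ 5 * ‖h‖ ^ 2 / R ^ 2 := by
    intro h hh
    have hxh : x₀ + h ∈ Ω := hsub (by simpa [mem_closedBall, dist_eq_norm] using hh.le)
    have ht1 : Filter.Tendsto (fun k => ‖F k (x₀ + h) - F k x₀ - D k h‖) (U : Filter ℕ)
        (nhds ‖f (x₀ + h) - f x₀ - L h‖) := by
      have := (((hf _ hxh).2.sub ((hf _ hx₀).2)).sub (happ h)).norm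
      exact this
    refine le_of_tendsto ht1 ?_
    apply Filter.univ_mem'
    intro k
    exact (keyEst hopen (hd k) (hb k) hRpos hsub hh).2
  -- conclude differentiability
  have hdf : HasFDerivAt f L x₀ := by
    rw [hasFDerivAt_iff_isLittleO_nhds_zero]
    rw [Asymptotics.isLittleO_iff]
    intro c hc
    have hev : ∀ᶠ h : Fin m → ℂ in nhds 0, ‖h‖ < min R (c * R ^ 2 / 5) := by
      apply Metric.eventually_nhds_iff.mpr
      exact ⟨min R (c * R ^ 2 / 5), by positivity, fun {y} hy => by
        simpa [dist_zero_right] using hy⟩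
    filter_upwards [hev] with h hh
    have h1 : ‖h‖ < R := lt_of_lt_of_le hh (min_le_left _ _)
    have h2 : ‖h‖ < c * R ^ 2 / 5 := lt_of_lt_of_le hh (min_le_right _ _)
    calc ‖f (x₀ + h) - f x₀ - L h‖ ≤ 5 * ‖h‖ ^ 2 / R ^ 2 := hquad h h1
      _ = 5 / R ^ 2 * ‖h‖ * ‖h‖ := by ring
      _ ≤ c * ‖h‖ := by
          apply mul_le_mul_of_nonneg_right _ (norm_nonneg h)
          rw [div_mul_eq_mul_div, div_le_iff₀ (by positivity)]
          nlinarith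
  exact hdf.differentiableAt.differentiableWithinAt

lemma lagrange {m n : ℕ} {Ω : Set (Fin m → ℂ)}
    (hCara : ∀ x ∈ Ω, ∀ y ∈ Ω, x ≠ y → ∃ f : (Fin m → ℂ) → ℂ,
      DifferentiableOn ℂ f Ω ∧ (∃ c : ℝ, ∀ x' ∈ Ω, ‖f x'‖ ≤ c) ∧ f x ≠ f y)
    (z : Fin n → (Fin m → ℂ)) (hz : ∀ j, z j ∈ Ω) (hinj : Function.Injective z)
    (x : Fin n → ℂ) :
    ∃ F : (Fin m → ℂ) → ℂ, ∃ M : ℝ, 0 ≤ M ∧ DifferentiableOn ℂ F Ω ∧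
      (∀ y ∈ Ω, ‖F y‖ ≤ M) ∧ ∀ k, F (z k) = x k := by
  classical
  have hsep : ∀ i j : Fin n, ∃ h : (Fin m → ℂ) → ℂ, ∃ M : ℝ, 0 ≤ M ∧
      DifferentiableOn ℂ h Ω ∧ (∀ y ∈ Ω, ‖h y‖ ≤ M) ∧
      (i ≠ j → h (z i) = 1 ∧ h (z j) = 0) := by
    intro i j
    by_cases hij : i = j
    · exact ⟨fun _ => 0, 0, le_refl 0, differentiableOn_const 0,
        fun y _ => by simp, fun h => absurd hij h⟩
    · obtain ⟨f, hfd, ⟨c, hfc⟩, hfne⟩ :=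
        hCara (z i) (hz i) (z j) (hz j) (fun h => hij (hinj h))
      have hd0 : f (z i) - f (z j) ≠ 0 := sub_ne_zero.mpr hfne
      have hc0 : 0 ≤ c := le_trans (norm_nonneg _) (hfc (z i) (hz i))
      refine ⟨fun y => (f y - f (z j)) / (f (z i) - f (z j)),
        (c + ‖f (z j)‖) / ‖f (z i) - f (z j)‖, ?_, ?_, ?_, ?_⟩
      · positivity
      · simp only [div_eq_mul_inv]
        exact (hfd.sub_const (f (z j))).mul_const ((f (z i) - f (z j))⁻¹)
      · intro y hy
        rw [norm_div]
        gcongr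
        · calc ‖f y - f (z j)‖ ≤ ‖f y‖ + ‖f (z j)‖ := by
                simpa using norm_sub_le (f y) (f (z j))
            _ ≤ c + ‖f (z j)‖ := by have := hfc y hy; linarith
      · intro _
        constructor
        · exact div_self hd0
        · simp
  choose h M hM0 hhd hhb hhval using hsep
  set g : Fin n → (Fin m → ℂ) → ℂ :=
    fun i y => ∏ j ∈ Finset.univ.erase i, h i j y with hg
  have hgd : ∀ i, DifferentiableOn ℂ (g i) Ω := by
    intro i y hy
    exact (HasFDerivWithinAt.finset_prod
      (fun j _ => (hhd i j y hy).hasFDerivWithinAt)).differentiableWithinAt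
  have hgb : ∀ i, ∀ y ∈ Ω, ‖g i y‖ ≤ ∏ j ∈ Finset.univ.erase i, M i j := by
    intro i y hy
    rw [hg]
    simp only
    rw [norm_prod]
    exact Finset.prod_le_prod (fun j _ => norm_nonneg _) (fun j _ => hhb i j y hy)
  have hgval : ∀ i k, g i (z k) = if k = i then 1 else 0 := by
    intro i k
    by_cases hk : k = i
    · subst hk
      simp only [hg, if_pos rfl]
      exact Finset.prod_eq_one fun j hj =>
        (hhval k j (fun e => (Finset.mem_erase.mp hj).1 e.symm)).1
    · simp only [hg, if_neg hk]
      exact Finset.prod_eq_zero (Finset.mem_erase.mpr ⟨hk, Finset.mem_univ k⟩)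
        ((hhval i k (fun e => hk e.symm)).2)
  refine ⟨fun y => ∑ i, x i * g i y,
    ∑ i, ‖x i‖ * ∏ j ∈ Finset.univ.erase i, M i j, ?_, ?_, ?_, ?_⟩
  · apply Finset.sum_nonneg
    intro i _
    exact mul_nonneg (norm_nonneg _) (Finset.prod_nonneg fun j _ => hM0 i j)
  · exact DifferentiableOn.fun_sum fun i _ => (hgd i).const_mul _
  · intro y hy
    show ‖∑ i, x i * g i y‖ ≤ _
    calc ‖∑ i, x i * g i y‖ ≤ ∑ i, ‖x i * g i y‖ :=
          by
            simpa using
              norm_sum_le Finset.univ (fun i => x i * g i y)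
      _ ≤ ∑ i, ‖x i‖ * ∏ j ∈ Finset.univ.erase i, M i j := by
          apply Finset.sum_le_sum
          intro i _
          rw [norm_mul]
          exact mul_le_mul_of_nonneg_left (hgb i y hy) (norm_nonneg _)
  · intro k
    show (∑ i, x i * g i (z k)) = x k
    rw [Finset.sum_eq_single k (fun i _ hik => by
        rw [hgval i k, if_neg (fun e => hik e.symm), mul_zero])
      (fun hk => absurd (Finset.mem_univ k) hk)]
    rw [hgval k k, if_pos rfl, mul_one]

noncomputable def dInv (m n : ℕ) (Ω : Set (Fin m → ℂ)) (z : Fin n → (Fin m → ℂ))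
    (α : Fin n → ℂ) (i j : Fin n) : ℝ :=
  sSup {r : ℝ | ∃ f : (Fin m → ℂ) → ℂ, DifferentiableOn ℂ f Ω ∧
    MapsTo f Ω (ball (0:ℂ) 1) ∧ (∃ c : ℂ, ∀ k, f (z k) = c * α k) ∧
    r = pdist (f (z i)) (f (z j))}

theorem stmt8 (m n : ℕ) (Ω : Set (Fin m → ℂ)) (hopen : IsOpen Ω) (hconn : IsConnected Ω)
    (hCara : ∀ x ∈ Ω, ∀ y ∈ Ω, x ≠ y → ∃ f : (Fin m → ℂ) → ℂ,
      DifferentiableOn ℂ f Ω ∧ (∃ c : ℝ, ∀ x' ∈ Ω, ‖f x'‖ ≤ c) ∧ f x ≠ f y)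
    (z : Fin n → (Fin m → ℂ)) (hz : ∀ j, z j ∈ Ω) (hinj : Function.Injective z)
    (α : Fin n → ℂ) (hα : α ≠ 0) (hαij : ∃ i j, α i ≠ α j)
    (t : ℝ) (ht : t = 1 / gauge (PickBody m n Ω z) α) :
    (∀ i j, dInv m n Ω z α i j = pdist ((t : ℂ) * α i) ((t : ℂ) * α j)) ∧
    ∃ f : (Fin m → ℂ) → ℂ, DifferentiableOn ℂ f Ω ∧
      MapsTo f Ω (closedBall (0:ℂ) 1) ∧ (∃ c : ℂ, ∀ k, f (z k) = c * α k) ∧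
      ∀ i j, dInv m n Ω z α i j = pdist (f (z i)) (f (z j)) := by
  classical
  obtain ⟨xΩ, hxΩ⟩ := hconn.nonempty
  set D : Set (Fin n → ℂ) := PickBody m n Ω z with hDdef
  -- 0 ∈ D
  have hzero : (0 : Fin n → ℂ) ∈ D :=
    ⟨fun _ => 0, differentiableOn_const 0, ⟨0, by norm_num, fun x _ => by simp⟩,
      fun j => by simp⟩
  -- members of D are bounded by 1 coordinatewise
  have hbdD : ∀ w ∈ D, ∀ k, ‖w k‖ ≤ 1 := by
    rintro w ⟨f, hfd, ⟨c, hc1, hcb⟩, hfv⟩ k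
    rw [← hfv k]
    exact (hcb _ (hz k)).trans hc1.le
  -- convexity
  have hconv : Convex ℝ D := by
    rintro w1 ⟨f1, hf1d, ⟨c1, hc11, hc1b⟩, hf1v⟩ w2 ⟨f2, hf2d, ⟨c2, hc21, hc2b⟩, hf2v⟩
      a b ha hb hab
    refine ⟨fun x => (a : ℂ) * f1 x + (b : ℂ) * f2 x,
      (hf1d.const_mul _).add (hf2d.const_mul _), ⟨a * c1 + b * c2, ?_, ?_⟩, fun j => ?_⟩
    · by_cases haz : a = 0
      · subst haz
        simp only [zero_mul, zero_add]
        have hb1 : b = 1 := by linarith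
        rw [hb1, one_mul]; exact hc21
      · have hapos : 0 < a := lt_of_le_of_ne ha (Ne.symm haz)
        have h1 : a * c1 < a := by nlinarith
        have hc20 : 0 ≤ c2 := le_trans (norm_nonneg _) (hc2b _ hxΩ)
        have h2 : b * c2 ≤ b := by nlinarith
        linarith
    · intro x hx
      calc ‖(a : ℂ) * f1 x + (b : ℂ) * f2 x‖
          ≤ ‖(a : ℂ) * f1 x‖ + ‖(b : ℂ) * f2 x‖ := by
            simpa using norm_add_le ((a:ℂ) * f1 x) ((b:ℂ) * f2 x)
        _ ≤ a * c1 + b * c2 := by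
            simp only [norm_mul, Complex.norm_of_nonneg ha,
              Complex.norm_of_nonneg hb]
            exact add_le_add (mul_le_mul_of_nonneg_left (hc1b x hx) ha)
              (mul_le_mul_of_nonneg_left (hc2b x hx) hb)
    · show (a : ℂ) * f1 (z j) + (b : ℂ) * f2 (z j) = (a • w1 + b • w2) j
      rw [hf1v j, hf2v j]
      simp [Pi.add_apply, Pi.smul_apply, Complex.real_smul]
  -- balanced
  have hbal : Balanced ℂ D := by
    intro a ha w hw
    obtain ⟨w0, hw0, rfl⟩ := hw
    obtain ⟨f, hfd, ⟨c, hc1, hcb⟩, hfv⟩ := hw0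
    refine ⟨fun x => a * f x, hfd.const_mul a, ⟨c, hc1, fun x hx => ?_⟩, fun j => ?_⟩
    · rw [norm_mul]
      calc ‖a‖ * ‖f x‖ ≤ 1 * c :=
            mul_le_mul (by simpa using ha) (hcb x hx)
              (norm_nonneg _) zero_le_one
        _ = c := one_mul c
    · show a * f (z j) = (a • w0) j
      rw [hfv j]; simp [Pi.smul_apply, smul_eq_mul]
  -- absorbent
  have habsorb : Absorbent ℝ D := by
    intro x
    obtain ⟨F, M, hM0, hFd, hFb, hFv⟩ := lagrange hCara z hz hinj x
    rw [absorbs_iff_norm]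
    refine ⟨M + 1, fun c hc => ?_⟩
    have hc1 : (M : ℝ) + 1 ≤ |c| := by simpa using hc
    have hc0 : c ≠ 0 := by
      intro h; rw [h] at hc1; simp at hc1; linarith
    rw [Set.singleton_subset_iff, Set.mem_smul_set_iff_inv_smul_mem₀ hc0]
    refine ⟨fun y => ((c⁻¹ : ℝ) : ℂ) * F y, hFd.const_mul _,
      ⟨M / (M + 1), ?_, fun y hy => ?_⟩, fun j => ?_⟩
    · rw [div_lt_one (by linarith)]; linarith
    · rw [norm_mul, Complex.norm_real, Real.norm_eq_abs, abs_inv]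
      have hcabs : 0 < |c| := by linarith
      calc |c|⁻¹ * ‖F y‖ ≤ |c|⁻¹ * M := by
            exact mul_le_mul_of_nonneg_left (hFb y hy) (by positivity)
        _ ≤ (M + 1)⁻¹ * M := by
            apply mul_le_mul_of_nonneg_right _ hM0
            exact inv_anti₀ (by linarith) hc1
        _ = M / (M + 1) := by rw [inv_mul_eq_div]
    · show ((c⁻¹ : ℝ) : ℂ) * F (z j) = (c⁻¹ • x) j
      rw [hFv j]
      simp [Pi.smul_apply, Complex.real_smul]
  -- gauge facts
  set γ : ℝ := gauge D α with hγdef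
  have hγub : ∀ k, ‖α k‖ ≤ γ := by
    intro k
    rw [hγdef]
    show ‖α k‖ ≤ sInf {r : ℝ | 0 < r ∧ α ∈ r • D}
    apply le_csInf (habsorb.gauge_set_nonempty)
    rintro r ⟨hr0, hrmem⟩
    obtain ⟨w, hw, hrw⟩ := hrmem
    have : α k = (r : ℂ) * w k := by
      rw [← hrw]; simp [Pi.smul_apply, Complex.real_smul]
    rw [this, norm_mul, Complex.norm_of_nonneg hr0.le]
    calc r * ‖w k‖ ≤ r * 1 :=
          mul_le_mul_of_nonneg_left (hbdD w hw k) hr0.le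
      _ = r := mul_one r
  have hγpos : 0 < γ := by
    obtain ⟨k₀, hk₀⟩ := Function.ne_iff.mp hα
    have : 0 < ‖α k₀‖ := norm_pos_iff.mpr (by simpa using hk₀)
    linarith [hγub k₀]
  have htpos : 0 < t := by rw [ht]; positivity
  have htγ : t * γ = 1 := by rw [ht]; field_simp
  have htα : ∀ k, t * ‖α k‖ ≤ 1 := by
    intro k
    calc t * ‖α k‖ ≤ t * γ := mul_le_mul_of_nonneg_left (hγub k) htpos.le
      _ = 1 := htγ
  -- membership of scaled α for s < t
  have hmemD : ∀ s : ℝ, 0 ≤ s → s < t → (s • α) ∈ D := by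
    intro s hs0 hst
    have hg : gauge D (s • α) < 1 := by
      rw [gauge_smul_of_nonneg hs0, smul_eq_mul, ← hγdef]
      calc s * γ < t * γ := by
            apply mul_lt_mul_of_pos_right hst hγpos
        _ = 1 := htγ
    exact gauge_lt_one_subset_self hconv hzero habsorb hg
  have hmemD' : ∀ s : ℝ, 0 ≤ s → s < t →
      ∃ F : (Fin m → ℂ) → ℂ, DifferentiableOn ℂ F Ω ∧
        (∃ c' : ℝ, c' < 1 ∧ ∀ x ∈ Ω, ‖F x‖ ≤ c') ∧
        ∀ k, F (z k) = (s : ℂ) * α k := by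
    intro s hs0 hst
    obtain ⟨F, hFd, hFc, hFv⟩ := hmemD s hs0 hst
    exact ⟨F, hFd, hFc, fun k => by
      rw [hFv k]; simp [Pi.smul_apply, Complex.real_smul]⟩
  -- upper bound on |c| for pointwise-bounded interpolating functions
  have hcle : ∀ (f : (Fin m → ℂ) → ℂ) (c : ℂ), DifferentiableOn ℂ f Ω →
      MapsTo f Ω (ball (0:ℂ) 1) → (∀ k, f (z k) = c * α k) → ‖c‖ ≤ t := by
    intro f c hfd hfm hfv
    have hkey : ∀ σ : ℝ, 0 < σ → σ < 1 → σ * (‖c‖ * γ) ≤ 1 := by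
      intro σ hσ0 hσ1
      have hmem : (((σ : ℂ) * c) • α) ∈ D := by
        refine ⟨fun x => (σ : ℂ) * f x, hfd.const_mul _, ⟨σ, hσ1, fun x hx => ?_⟩,
          fun j => ?_⟩
        · rw [norm_mul, Complex.norm_of_nonneg hσ0.le]
          have : ‖f x‖ < 1 := by
            simpa [mem_ball, Complex.dist_eq] using hfm hx
          nlinarith
        · show (σ : ℂ) * f (z j) = _
          rw [hfv j]
          simp [Pi.smul_apply, smul_eq_mul]
          ring
      have h1 : gauge D (((σ : ℂ) * c) • α) ≤ 1 := gauge_le_one_of_mem hmem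
      rw [gauge_smul hbal, ← hγdef] at h1
      calc σ * (‖c‖ * γ) = ‖(σ : ℂ) * c‖ * γ := by
            rw [norm_mul, Complex.norm_of_nonneg hσ0.le]
            ring
        _ ≤ 1 := h1
    have hcγ : ‖c‖ * γ ≤ 1 := by
      by_contra hgt
      push_neg at hgt
      set X : ℝ := ‖c‖ * γ with hX
      have hX1 : 1 < X := hgt
      have hX0 : 0 < X := lt_trans one_pos hX1
      have hσdef : (0:ℝ) < (1 + X) / (2 * X) := by positivity
      have hσ1 : (1 + X) / (2 * X) < 1 := by
        rw [div_lt_one (by positivity)]; linarith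
      have := hkey _ hσdef hσ1
      rw [div_mul_eq_mul_div, div_le_one (by positivity)] at this
      nlinarith
    calc ‖c‖ = ‖c‖ * γ * t := by
          rw [mul_assoc, mul_comm γ t, htγ, mul_one]
      _ ≤ 1 * t := mul_le_mul_of_nonneg_right hcγ htpos.le
      _ = t := one_mul t
  -- an increasing sequence converging to t from below
  set sk : ℕ → ℝ := fun k => t - t / (k + 1) with hskdef
  have hsk0 : ∀ k : ℕ, 0 ≤ sk k := by
    intro k
    have h1 : (1:ℝ) ≤ (k:ℝ) + 1 := by
      have : (0:ℝ) ≤ (k:ℝ) := Nat.cast_nonneg k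
      linarith
    have := div_le_self htpos.le h1
    rw [hskdef]
    simp only
    linarith
  have hsklt : ∀ k : ℕ, sk k < t := by
    intro k
    have h2 : (0:ℝ) < t / ((k:ℝ) + 1) := by positivity
    rw [hskdef]
    simp only
    linarith
  have hsktend : Filter.Tendsto sk Filter.atTop (nhds t) := by
    have h1 : Filter.Tendsto (fun k : ℕ => t * (1 / ((k:ℝ) + 1))) Filter.atTop
        (nhds (t * 0)) := tendsto_one_div_add_atTop_nhds_zero_nat.const_mul t
    have h2 : Filter.Tendsto (fun k : ℕ => t - t / ((k:ℝ) + 1)) Filter.atTop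
        (nhds (t - t * 0)) := tendsto_const_nhds.sub (by simpa [div_eq_mul_inv] using h1)
    rw [hskdef]
    simpa using h2
  -- Part 1
  have part1 : ∀ i j, dInv m n Ω z α i j = pdist ((t : ℂ) * α i) ((t : ℂ) * α j) := by
    intro i j
    set S : Set ℝ := {r : ℝ | ∃ f : (Fin m → ℂ) → ℂ, DifferentiableOn ℂ f Ω ∧
      MapsTo f Ω (ball (0:ℂ) 1) ∧ (∃ c : ℂ, ∀ k, f (z k) = c * α k) ∧
      r = pdist (f (z i)) (f (z j))} with hSdef
    have hdinv : dInv m n Ω z α i j = sSup S := rfl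
    rw [hdinv]
    have h0S : (0:ℝ) ∈ S :=
      ⟨fun _ => 0, differentiableOn_const 0,
        fun x _ => by simpa using mem_ball_self one_pos,
        ⟨0, fun k => by simp⟩, by simp [pdist]⟩
    have hub : ∀ r ∈ S, r ≤ pdist ((t:ℂ) * α i) ((t:ℂ) * α j) := by
      rintro r ⟨f, hfd, hfm, ⟨c, hfc⟩, rfl⟩
      rw [hfc i, hfc j, pdist_mul_abs]
      have hct : ‖c‖ ≤ t := hcle f c hfd hfm hfc
      by_cases hij : α i = α j
      · rw [hij, pdist_self, pdist_self]
      · exact pdist_mono (norm_nonneg c) hct (htα i) (htα j) hij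
    have hbdd : BddAbove S := ⟨pdist ((t:ℂ) * α i) ((t:ℂ) * α j), fun r hr => hub r hr⟩
    have hge : pdist ((t:ℂ) * α i) ((t:ℂ) * α j) ≤ sSup S := by
      by_cases hij : α i = α j
      · rw [hij, pdist_self]
        exact le_csSup hbdd h0S
      · have hpS : ∀ k : ℕ, pdist (((sk k : ℝ):ℂ) * α i) (((sk k : ℝ):ℂ) * α j) ∈ S := by
          intro k
          obtain ⟨F, hFd, ⟨c', hc'1, hc'b⟩, hFv⟩ := hmemD' (sk k) (hsk0 k) (hsklt k)
          refine ⟨F, hFd, fun x hx => ?_, ⟨((sk k : ℝ):ℂ), hFv⟩, ?_⟩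
          · rw [mem_ball, Complex.dist_eq, sub_zero]
            exact lt_of_le_of_lt (hc'b x hx) hc'1
          · rw [hFv i, hFv j]
        have hK : (1:ℂ) - (t:ℂ)^2 * ((starRingEnd ℂ) (α i) * α j) ≠ 0 :=
          den_ne htpos.le (htα i) (htα j) hij
        have hcont : Filter.Tendsto (fun s : ℝ => pdist ((s:ℂ) * α i) ((s:ℂ) * α j))
            (nhds t) (nhds (pdist ((t:ℂ) * α i) ((t:ℂ) * α j))) := by
          have heq : (fun s : ℝ => pdist ((s:ℂ) * α i) ((s:ℂ) * α j)) = fun s : ℝ =>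
              ‖(s:ℂ) * (α i - α j)‖ /
                ‖1 - (s:ℂ)^2 * ((starRingEnd ℂ) (α i) * α j)‖ := by
            funext s; exact pdist_form s (α i) (α j)
          rw [heq, pdist_form]
          have hnum : Continuous fun s : ℝ => ‖(s:ℂ) * (α i - α j)‖ :=
            continuous_norm.comp (Complex.continuous_ofReal.mul continuous_const)
          have hden : Continuous fun s : ℝ =>
              ‖1 - (s:ℂ)^2 * ((starRingEnd ℂ) (α i) * α j)‖ :=
            continuous_norm.comp (continuous_const.sub
              ((Complex.continuous_ofReal.pow 2).mul continuous_const))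
          apply Filter.Tendsto.div (hnum.tendsto t) (hden.tendsto t)
          exact norm_ne_zero_iff.mpr hK
        have htendS : Filter.Tendsto
            (fun k => pdist (((sk k : ℝ):ℂ) * α i) (((sk k : ℝ):ℂ) * α j))
            Filter.atTop (nhds (pdist ((t:ℂ) * α i) ((t:ℂ) * α j))) := hcont.comp hsktend
        exact le_of_tendsto htendS (Filter.Eventually.of_forall fun k => le_csSup hbdd (hpS k))
    exact le_antisymm (csSup_le ⟨0, h0S⟩ hub) hge
  -- Part 2 : the extremal function
  have hFex : ∀ k : ℕ, ∃ F : (Fin m → ℂ) → ℂ, DifferentiableOn ℂ F Ω ∧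
      (∀ x ∈ Ω, ‖F x‖ ≤ 1) ∧ ∀ j', F (z j') = ((sk k : ℝ):ℂ) * α j' := by
    intro k
    obtain ⟨F, hFd, ⟨c', hc'1, hc'b⟩, hFv⟩ := hmemD' (sk k) (hsk0 k) (hsklt k)
    exact ⟨F, hFd, fun x hx => (hc'b x hx).trans hc'1.le, hFv⟩
  choose F hFd hFb hFv using hFex
  obtain ⟨f, hfd, hfb, U, hUle, hflim⟩ := limitExists hopen F hFd hFb
  have hval : ∀ j', f (z j') = (t : ℂ) * α j' := by
    intro j'
    have h1 := hflim _ (hz j')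
    have h3 : Filter.Tendsto (fun k => ((sk k : ℝ):ℂ) * α j') Filter.atTop
        (nhds ((t:ℂ) * α j')) :=
      ((Complex.continuous_ofReal.tendsto t).comp hsktend).mul_const (α j')
    have h2 : Filter.Tendsto (fun k => F k (z j')) (U : Filter ℕ)
        (nhds ((t:ℂ) * α j')) :=
      (h3.mono_left hUle).congr (fun k => (hFv k j').symm)
    exact tendsto_nhds_unique h1 h2
  refine ⟨part1, f, hfd, fun x hx => ?_, ⟨(t:ℂ), hval⟩, fun i j => ?_⟩
  · rw [mem_closedBall, Complex.dist_eq, sub_zero]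
    exact hfb x hx
  · rw [hval i, hval j]
    exact part1 i j
end

section
/- Given distinct z1,…,zn ∈ D and α = (0,…,0,1) ∈ ℂ^n, one has d_α(z_i, z_j) = 0 for 1 ≤ i, j ≤ n−1, and d_α(z_i, z_n) = ∏_{l=1}^{n−1} |(z_l − z_n)/(1 − conj(z_l)·z_n)| for 1 ≤ i ≤ n−1. -/
open Complex Metric Set

noncomputable def dInvD (n : ℕ) (z : Fin n → ℂ) (α : Fin n → ℂ) (i j : Fin n) : ℝ :=
  sSup {r : ℝ | ∃ f : ℂ → ℂ, DifferentiableOn ℂ f (ball (0:ℂ) 1) ∧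
    MapsTo f (ball (0:ℂ) 1) (ball (0:ℂ) 1) ∧ (∃ c : ℂ, ∀ k, f (z k) = c * α k) ∧
    r = pdist (f (z i)) (f (z j))}

lemma aux_denom_ne {a w : ℂ} (ha : ‖a‖ < 1) (hw : ‖w‖ < 1) :
    1 - (starRingEnd ℂ) a * w ≠ 0 := by
  intro h
  have h1 : (starRingEnd ℂ) a * w = 1 := by linear_combination -h
  have h2 : ‖(starRingEnd ℂ) a * w‖ = ‖(1:ℂ)‖ := by rw [h1]
  rw [norm_mul, norm_one, Complex.norm_conj] at h2
  nlinarith [norm_nonneg a, norm_nonneg w]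

lemma aux_normSq (a w : ℂ) :
    Complex.normSq (1 - (starRingEnd ℂ) a * w) - Complex.normSq (a - w)
      = (1 - Complex.normSq a) * (1 - Complex.normSq w) := by
  simp only [Complex.normSq_apply, Complex.sub_re, Complex.sub_im, Complex.mul_re,
    Complex.mul_im, Complex.one_re, Complex.one_im, Complex.conj_re, Complex.conj_im]
  ring

lemma aux_mobius_lt {a w : ℂ} (ha : ‖a‖ < 1) (hw : ‖w‖ < 1) :
    ‖(a - w) / (1 - (starRingEnd ℂ) a * w)‖ < 1 := by
  have hna : Complex.normSq a < 1 := by rw [← Complex.sq_norm]; nlinarith [norm_nonneg a]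
  have hnw : Complex.normSq w < 1 := by rw [← Complex.sq_norm]; nlinarith [norm_nonneg w]
  have h1 : Complex.normSq (a - w) < Complex.normSq (1 - (starRingEnd ℂ) a * w) := by
    have := aux_normSq a w
    nlinarith
  have h2 : ‖a - w‖ < ‖1 - (starRingEnd ℂ) a * w‖ := by
    rw [Complex.norm_def, Complex.norm_def]
    exact Real.sqrt_lt_sqrt (Complex.normSq_nonneg _) h1
  rw [norm_div, div_lt_one (lt_of_le_of_lt (norm_nonneg _) h2)]
  exact h2

lemma aux_mobius_invol {a w : ℂ} (ha : ‖a‖ < 1) (hw : ‖w‖ < 1) :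
    (a - (a - w) / (1 - (starRingEnd ℂ) a * w)) /
      (1 - (starRingEnd ℂ) a * ((a - w) / (1 - (starRingEnd ℂ) a * w))) = w := by
  have h1 := aux_denom_ne ha hw
  have h3 := aux_denom_ne ha ha
  have hnum : a - (a - w) / (1 - (starRingEnd ℂ) a * w)
      = (w * (1 - (starRingEnd ℂ) a * a)) / (1 - (starRingEnd ℂ) a * w) := by
    rw [eq_div_iff h1, sub_mul, div_mul_cancel₀ _ h1]
    ring
  have hden : 1 - (starRingEnd ℂ) a * ((a - w) / (1 - (starRingEnd ℂ) a * w))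
      = (1 - (starRingEnd ℂ) a * a) / (1 - (starRingEnd ℂ) a * w) := by
    field_simp
    ring
  rw [hnum, hden, div_eq_iff (div_ne_zero h3 h1), mul_div_assoc]

lemma aux_mobius_diff {a : ℂ} (ha : ‖a‖ < 1) :
    DifferentiableOn ℂ (fun w => (a - w) / (1 - (starRingEnd ℂ) a * w)) (ball (0:ℂ) 1) := by
  apply DifferentiableOn.div
  · exact (differentiableOn_const a).sub differentiableOn_id
  · exact (differentiableOn_const 1).sub ((differentiableOn_const _).mul differentiableOn_id)
  · exact fun w hw => aux_denom_ne ha (mem_ball_zero_iff.1 hw)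

lemma pick_step {f : ℂ → ℂ} {a : ℂ} (ha : ‖a‖ < 1)
    (hf : DifferentiableOn ℂ f (ball (0:ℂ) 1))
    (hb : ∀ w ∈ ball (0:ℂ) 1, ‖f w‖ ≤ 1) (h0 : f a = 0)
    {w : ℂ} (hw : ‖w‖ < 1) :
    ‖f w‖ ≤ ‖(a - w) / (1 - (starRingEnd ℂ) a * w)‖ := by
  have key : ∀ ε : ℝ, 0 < ε → ε < 1 →
      (1 - ε) * ‖f w‖ ≤ ‖(a - w) / (1 - (starRingEnd ℂ) a * w)‖ := by
    intro ε hε0 hε1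
    set g : ℂ → ℂ := fun u => ((1 - ε : ℝ) : ℂ) * f ((a - u) / (1 - (starRingEnd ℂ) a * u))
      with hg_def
    have hmaps : MapsTo (fun u => (a - u) / (1 - (starRingEnd ℂ) a * u))
        (ball (0:ℂ) 1) (ball (0:ℂ) 1) := fun u hu =>
      mem_ball_zero_iff.2 (aux_mobius_lt ha (mem_ball_zero_iff.1 hu))
    have hgd : DifferentiableOn ℂ g (ball (0:ℂ) 1) :=
      (differentiableOn_const _).mul ((hf.comp (aux_mobius_diff ha) hmaps))
    have hgm : MapsTo g (ball (0:ℂ) 1) (ball (0:ℂ) 1) := by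
      intro u hu
      rw [mem_ball_zero_iff, hg_def]
      simp only [norm_mul, Complex.norm_real, Real.norm_eq_abs]
      have h1 : ‖f ((a - u) / (1 - (starRingEnd ℂ) a * u))‖ ≤ 1 :=
        hb _ (hmaps hu)
      have h2 : |1 - ε| = 1 - ε := abs_of_pos (by linarith)
      rw [h2]
      nlinarith [norm_nonneg (f ((a - u) / (1 - (starRingEnd ℂ) a * u)))]
    have hg0 : g 0 = 0 := by
      rw [hg_def]
      simp [h0]
    have hsch := Complex.norm_le_norm_of_mapsTo_ball hgd (hgm.mono_right ball_subset_closedBall) hg0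
      (z := (a - w) / (1 - (starRingEnd ℂ) a * w)) (aux_mobius_lt ha hw)
    rw [hg_def] at hsch
    simp only at hsch
    rw [aux_mobius_invol ha hw, norm_mul, Complex.norm_real, Real.norm_eq_abs,
      abs_of_pos (by linarith : (0:ℝ) < 1 - ε)] at hsch
    exact hsch
  by_contra hlt
  push_neg at hlt
  set F := ‖f w‖ with hF
  set X := ‖(a - w) / (1 - (starRingEnd ℂ) a * w)‖ with hX
  have hF1 : F ≤ 1 := hb w (mem_ball_zero_iff.2 hw)
  have hFpos : 0 < F := lt_of_le_of_lt (norm_nonneg _) hlt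
  have hXnn : 0 ≤ X := norm_nonneg _
  have hε : (0:ℝ) < (F - X) / (2 * F) := div_pos (by linarith) (by linarith)
  have hε1 : (F - X) / (2 * F) < 1 := by
    rw [div_lt_one (by positivity)]
    nlinarith
  have := key _ hε hε1
  rw [sub_mul, one_mul, div_mul_eq_mul_div, sub_le_iff_le_add] at this
  have hdiv : (F - X) * F / (2 * F) = (F - X) / 2 := by
    field_simp [hFpos.ne']
  rw [hdiv] at this
  linarith

lemma blaschke_bound (T : Finset ℂ) (hT : ∀ a ∈ T, ‖a‖ < 1) (f : ℂ → ℂ)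
    (hf : DifferentiableOn ℂ f (ball (0:ℂ) 1))
    (hb : ∀ w ∈ ball (0:ℂ) 1, ‖f w‖ ≤ 1)
    (h0 : ∀ a ∈ T, f a = 0) {w : ℂ} (hw : ‖w‖ < 1) :
    ‖f w‖ ≤ T.prod (fun a => ‖(a - w) / (1 - (starRingEnd ℂ) a * w)‖) := by
  classical
  induction T using Finset.induction_on generalizing f w with
  | empty => simpa using hb w (mem_ball_zero_iff.2 hw)
  | @insert a s hnot ih =>
    have ha : ‖a‖ < 1 := hT a (Finset.mem_insert_self a s)
    have h0a : f a = 0 := h0 a (Finset.mem_insert_self a s)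
    set g : ℂ → ℂ := fun u => (1 - (starRingEnd ℂ) a * u) * dslope f a u with hg_def
    have hfeq : ∀ u, f u = (u - a) * dslope f a u := by
      intro u
      have h := sub_smul_dslope f a u
      rw [smul_eq_mul, h0a, sub_zero] at h
      exact h.symm
    have hgd : DifferentiableOn ℂ g (ball (0:ℂ) 1) := by
      apply DifferentiableOn.mul
      · exact (differentiableOn_const 1).sub ((differentiableOn_const _).mul differentiableOn_id)
      · exact (differentiableOn_dslope (isOpen_ball.mem_nhds (mem_ball_zero_iff.2 ha))).2 hf
    have hfg : ∀ u, ‖u‖ < 1 →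
        ‖f u‖ =
          ‖(a - u) / (1 - (starRingEnd ℂ) a * u)‖ * ‖g u‖ := by
      intro u hu
      have hne := aux_denom_ne ha hu
      have hkey : (a - u) / (1 - (starRingEnd ℂ) a * u) * g u = -(f u) := by
        rw [hfeq u, hg_def]
        beta_reduce
        rw [div_mul_eq_mul_div, div_eq_iff hne]
        ring
      rw [← norm_mul, hkey, norm_neg]
    have hkey2 : ∀ u, ‖u‖ < 1 → u ≠ a → ‖g u‖ ≤ 1 := by
      intro u hu hune
      have hstep := pick_step ha hf hb h0a hu
      have heq := hfg u hu
      have hψpos : 0 < ‖(a - u) / (1 - (starRingEnd ℂ) a * u)‖ :=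
        norm_pos_iff.2 (div_ne_zero (sub_ne_zero.2 fun h => hune h.symm) (aux_denom_ne ha hu))
      rw [heq] at hstep
      exact (mul_le_iff_le_one_right hψpos).1 hstep
    have hgb : ∀ u ∈ ball (0:ℂ) 1, ‖g u‖ ≤ 1 := by
      intro u hu
      rcases eq_or_ne u a with rfl | hune
      · have hc : ContinuousAt g u := (hgd.differentiableAt (isOpen_ball.mem_nhds hu)).continuousAt
        have ht : Filter.Tendsto (fun v => ‖g v‖) (nhdsWithin u {u}ᶜ)
            (nhds (‖g u‖)) :=
          (continuous_norm.continuousAt.comp hc).continuousWithinAt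
        refine le_of_tendsto ht ?_
        filter_upwards [mem_nhdsWithin_of_mem_nhds (isOpen_ball.mem_nhds hu),
          self_mem_nhdsWithin] with v hv hv'
        exact hkey2 v (mem_ball_zero_iff.1 hv) hv'
      · exact hkey2 u (mem_ball_zero_iff.1 hu) hune
    have hg0 : ∀ b ∈ s, g b = 0 := by
      intro b hbs
      have hba : b ≠ a := fun h => hnot (h ▸ hbs)
      have hfb : f b = 0 := h0 b (Finset.mem_insert_of_mem hbs)
      rw [hg_def]
      simp [dslope_of_ne f hba, slope, hfb, h0a]
    have IH := ih (fun b hbs => hT b (Finset.mem_insert_of_mem hbs)) g hgd hgb hg0 hw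
    rw [Finset.prod_insert hnot, hfg w hw]
    exact mul_le_mul_of_nonneg_left IH (norm_nonneg _)

lemma diffOn_finprod {ι : Type*} (s : Finset ι) (F : ι → ℂ → ℂ)
    (h : ∀ i ∈ s, DifferentiableOn ℂ (F i) (ball (0:ℂ) 1)) :
    DifferentiableOn ℂ (fun w => s.prod (fun i => F i w)) (ball (0:ℂ) 1) := by
  classical
  induction s using Finset.induction_on with
  | empty => simp only [Finset.prod_empty]; exact differentiableOn_const (1:ℂ)
  | @insert a s hnot ih =>
    simp only [Finset.prod_insert hnot]
    exact (h a (Finset.mem_insert_self a s)).mul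
      (ih fun i hi => h i (Finset.mem_insert_of_mem hi))

theorem stmt12 (n : ℕ) (z : Fin (n + 1) → ℂ) (hz : ∀ j, z j ∈ ball (0:ℂ) 1)
    (hinj : Function.Injective z)
    (α : Fin (n + 1) → ℂ) (hα : α = fun j => if j = Fin.last n then 1 else 0) :
    (∀ i j, i ≠ Fin.last n → j ≠ Fin.last n → dInvD (n + 1) z α i j = 0) ∧
    (∀ i, i ≠ Fin.last n → dInvD (n + 1) z α i (Fin.last n) =
      (Finset.univ.erase (Fin.last n)).prod fun l =>
        ‖(z l - z (Fin.last n)) / (1 - (starRingEnd ℂ) (z l) * z (Fin.last n))‖) := by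
  subst hα
  constructor
  · intro i j hi hj
    rw [dInvD]
    have hset : {r : ℝ | ∃ f : ℂ → ℂ, DifferentiableOn ℂ f (ball (0:ℂ) 1) ∧
        MapsTo f (ball (0:ℂ) 1) (ball (0:ℂ) 1) ∧
        (∃ c : ℂ, ∀ k, f (z k) = c * (if k = Fin.last n then 1 else 0)) ∧
        r = pdist (f (z i)) (f (z j))} = {0} := by
      ext r
      constructor
      · rintro ⟨f, hdf, hmf, ⟨c, hc⟩, rfl⟩
        have hfi : f (z i) = 0 := by simpa [if_neg hi] using hc i
        have hfj : f (z j) = 0 := by simpa [if_neg hj] using hc j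
        simp [hfi, hfj, pdist]
      · rintro rfl
        refine ⟨fun _ => 0, differentiableOn_const 0,
          fun x _ => mem_ball_zero_iff.2 (by simp), ⟨0, fun k => by simp⟩, by simp [pdist]⟩
    rw [hset]
    exact csSup_singleton 0
  · intro i hi
    set L := Fin.last n with hL
    set w0 := z L with hw0def
    have hw0 : ‖w0‖ < 1 := mem_ball_zero_iff.1 (hz L)
    set P := (Finset.univ.erase L).prod fun l =>
      ‖(z l - w0) / (1 - (starRingEnd ℂ) (z l) * w0)‖ with hP
    rw [dInvD]
    set S := {r : ℝ | ∃ f : ℂ → ℂ, DifferentiableOn ℂ f (ball (0:ℂ) 1) ∧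
        MapsTo f (ball (0:ℂ) 1) (ball (0:ℂ) 1) ∧
        (∃ c : ℂ, ∀ k, f (z k) = c * (if k = L then 1 else 0)) ∧
        r = pdist (f (z i)) (f (z L))} with hS
    have hiL : i ∈ Finset.univ.erase L := Finset.mem_erase.2 ⟨hi, Finset.mem_univ i⟩
    -- upper bound
    have hub : ∀ r ∈ S, r ≤ P := by
      rintro r ⟨f, hdf, hmf, ⟨c, hc⟩, rfl⟩
      have hflast : f w0 = c := by simpa using hc L
      have hfi : f (z i) = 0 := by simpa [if_neg hi] using hc i
      have hbound : ‖f w0‖ ≤ P := by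
        have hT : ∀ a ∈ (Finset.univ.erase L).image z, ‖a‖ < 1 := by
          intro a ha
          obtain ⟨l, _, rfl⟩ := Finset.mem_image.1 ha
          exact mem_ball_zero_iff.1 (hz l)
        have h0 : ∀ a ∈ (Finset.univ.erase L).image z, f a = 0 := by
          intro a ha
          obtain ⟨l, hl, rfl⟩ := Finset.mem_image.1 ha
          have hlL : l ≠ L := (Finset.mem_erase.1 hl).1
          simpa [if_neg hlL] using hc l
        have hmain := blaschke_bound ((Finset.univ.erase L).image z) hT f hdf
          (fun w hw => (mem_ball_zero_iff.1 (hmf hw)).le) h0 hw0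
        rwa [Finset.prod_image (fun x _ y _ h => hinj h)] at hmain
      have hr : pdist (f (z i)) (f (z L)) = ‖f w0‖ := by
        rw [← hw0def, hfi, pdist]
        simp
      rw [hr]
      exact hbound
    -- membership
    have hPmem : P ∈ S := by
      set B : ℂ → ℂ := fun w =>
        (Finset.univ.erase L).prod fun l => (z l - w) / (1 - (starRingEnd ℂ) (z l) * w) with hB
      have habs : ∀ w : ℂ, ‖B w‖ = (Finset.univ.erase L).prod fun l =>
          ‖(z l - w) / (1 - (starRingEnd ℂ) (z l) * w)‖ := by
        intro w; rw [hB]; exact Complex.norm_prod _ _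
      have hdB : DifferentiableOn ℂ B (ball (0:ℂ) 1) :=
        diffOn_finprod _ _ fun l _ => aux_mobius_diff (mem_ball_zero_iff.1 (hz l))
      have hmB : MapsTo B (ball (0:ℂ) 1) (ball (0:ℂ) 1) := by
        intro w hw
        rw [mem_ball_zero_iff, habs]
        have hwlt := mem_ball_zero_iff.1 hw
        calc (Finset.univ.erase L).prod (fun l =>
              ‖(z l - w) / (1 - (starRingEnd ℂ) (z l) * w)‖)
            = ‖(z i - w) / (1 - (starRingEnd ℂ) (z i) * w)‖ *
              ((Finset.univ.erase L).erase i).prod (fun l =>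
              ‖(z l - w) / (1 - (starRingEnd ℂ) (z l) * w)‖) :=
              (Finset.mul_prod_erase _ _ hiL).symm
          _ ≤ ‖(z i - w) / (1 - (starRingEnd ℂ) (z i) * w)‖ * 1 := by
              apply mul_le_mul_of_nonneg_left _ (norm_nonneg _)
              exact Finset.prod_le_one (fun l _ => norm_nonneg _)
                (fun l _ => (aux_mobius_lt (mem_ball_zero_iff.1 (hz l)) hwlt).le)
          _ < 1 := by
              rw [mul_one]
              exact aux_mobius_lt (mem_ball_zero_iff.1 (hz i)) hwlt
      have hcB : ∀ k, B (z k) = B w0 * (if k = L then 1 else 0) := by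
        intro k
        rcases eq_or_ne k L with rfl | hk
        · simp [hw0def]
        · rw [if_neg hk, mul_zero, hB]
          apply Finset.prod_eq_zero (Finset.mem_erase.2 ⟨hk, Finset.mem_univ k⟩)
          simp
      refine ⟨B, hdB, hmB, ⟨B w0, hcB⟩, ?_⟩
      have hBi : B (z i) = 0 := by simpa [if_neg hi] using hcB i
      rw [← hw0def, hBi, pdist]
      simp only [zero_sub, map_zero, zero_mul, sub_zero, div_one, norm_neg]
      rw [habs]
    refine le_antisymm (csSup_le ⟨P, hPmem⟩ hub) (le_csSup ⟨P, hub⟩ hPmem)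
end
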